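/- arXiv:2410.07922 — 12 statements merged into one kernel-verified Lean document; each statement's English description precedes it below -/
import Mathlib

section
/- For every integer k ≥ 2, the polynomial A(x) = x^k - x^{k-1} - ... - 1 has simple roots (its discriminant is nonzero, i.e., gcd(A, A') = 1 over ℂ). -/
open Polynomial Finset

lemma aux_ineq (m : ℕ) : ((m : ℝ) + 3) ^ (m + 3) < 2 * (2 * ((m : ℝ) + 2)) ^ (m + 2) := by
  have h3 : (0 : ℝ) < (m : ℝ) + 3 := by positivity
  set x : ℝ := ((m : ℝ) + 1) / ((m : ℝ) + 3) with hx
  have hx0 : 0 ≤ x := by positivity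
  have hb : 1 + ((m : ℝ) + 2) * x ≤ (1 + x) ^ (m + 2) := by
    have := one_add_mul_le_pow (a := x) (by linarith) (m + 2)
    push_cast at this
    linarith
  have h1x : 1 + x = (2 * ((m : ℝ) + 2)) / ((m : ℝ) + 3) := by
    rw [hx]; field_simp; ring
  have hkey : ((m : ℝ) + 3) < 2 * (1 + ((m : ℝ) + 2) * x) := by
    have heq : 2 * (1 + ((m : ℝ) + 2) * x)
        = (2 * ((m : ℝ) + 3) + 2 * ((m : ℝ) + 2) * ((m : ℝ) + 1)) / ((m : ℝ) + 3) := by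
      rw [hx]; field_simp
    rw [heq, lt_div_iff₀ h3]
    nlinarith [sq_nonneg ((m : ℝ) + 1)]
  calc ((m : ℝ) + 3) ^ (m + 3) = ((m : ℝ) + 3) * ((m : ℝ) + 3) ^ (m + 2) := by ring
    _ < (2 * (1 + ((m : ℝ) + 2) * x)) * ((m : ℝ) + 3) ^ (m + 2) :=
        mul_lt_mul_of_pos_right hkey (by positivity)
    _ ≤ (2 * (1 + x) ^ (m + 2)) * ((m : ℝ) + 3) ^ (m + 2) := by
        have hp : (0 : ℝ) ≤ ((m : ℝ) + 3) ^ (m + 2) := by positivity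
        have : 2 * (1 + ((m : ℝ) + 2) * x) ≤ 2 * (1 + x) ^ (m + 2) := by linarith
        exact mul_le_mul_of_nonneg_right this hp
    _ = 2 * (2 * ((m : ℝ) + 2)) ^ (m + 2) := by
        rw [h1x, div_pow]
        field_simp

theorem stmt_3 (k : ℕ) (hk : 2 ≤ k) :
    IsCoprime ((X : Polynomial ℂ) ^ k - ∑ j ∈ range k, X ^ j)
      (Polynomial.derivative ((X : Polynomial ℂ) ^ k - ∑ j ∈ range k, X ^ j)) := by
  obtain ⟨m, rfl⟩ : ∃ m, k = m + 2 := ⟨k - 2, by omega⟩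
  set A : Polynomial ℂ := X ^ (m + 2) - ∑ j ∈ range (m + 2), X ^ j with hAdef
  rw [Polynomial.isCoprime_iff_aeval_ne_zero_of_isAlgClosed (k := ℂ) ℂ]
  intro a
  by_contra h
  push_neg at h
  obtain ⟨hA0, hA1⟩ := h
  -- the key polynomial identity (X - 1) * A = X^(m+3) - 2 X^(m+2) + 1
  have hg := geom_sum_mul (X : Polynomial ℂ) (m + 2)
  have h1 : ((X : Polynomial ℂ) - 1) * A
      = X ^ (m + 3) - 2 * X ^ (m + 2) + 1 := by
    rw [hAdef]
    linear_combination (-1 : Polynomial ℂ) * hg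
  have h2 := congrArg derivative h1
  rw [derivative_mul] at h2
  simp only [derivative_sub, derivative_add, derivative_X, derivative_one, derivative_X_pow,
    derivative_mul, derivative_ofNat, Nat.add_sub_cancel, zero_mul, zero_add, mul_zero,
    sub_zero, add_zero, Nat.cast_add, Nat.cast_ofNat, Nat.cast_one] at h2
  -- evaluate both identities at a
  have hB : a ^ (m + 3) - 2 * a ^ (m + 2) + 1 = 0 := by
    have := congrArg (aeval a) h1
    simp only [map_sub, map_mul, map_add, map_one, map_pow, aeval_X, map_ofNat, hA0,
      mul_zero] at this
    linear_combination -this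
  have hB' : ((m : ℂ) + 3) * a ^ (m + 2) - 2 * (((m : ℂ) + 2) * a ^ (m + 1)) = 0 := by
    have := congrArg (aeval a) h2
    simp only [map_sub, map_mul, map_add, map_one, map_pow, aeval_X, map_ofNat, aeval_C,
      map_natCast, hA0, hA1, mul_zero, one_mul, zero_add, add_zero] at this
    push_cast at this
    linear_combination -this
  have hfac : a ^ (m + 1) * (((m : ℂ) + 3) * a - 2 * ((m : ℂ) + 2)) = 0 := by
    linear_combination hB'
  rcases mul_eq_zero.mp hfac with h0 | hlin
  · have ha : a = 0 := by
      exact pow_eq_zero_iff (n := m + 1) (by omega) |>.mp h0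
    rw [ha] at hB
    simp [zero_pow] at hB
  · have hlin' : ((m : ℂ) + 3) * a = 2 * ((m : ℂ) + 2) := by
      linear_combination hlin
    have e2 : ((m : ℂ) + 3) ^ (m + 2) * a ^ (m + 2) = (2 * ((m : ℂ) + 2)) ^ (m + 2) := by
      rw [← mul_pow, hlin']
    have e3 : ((m : ℂ) + 3) ^ (m + 3) * a ^ (m + 3) = (2 * ((m : ℂ) + 2)) ^ (m + 3) := by
      rw [← mul_pow, hlin']
    have key : ((m : ℂ) + 3) ^ (m + 3) = 2 * (2 * ((m : ℂ) + 2)) ^ (m + 2) := by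
      linear_combination ((m : ℂ) + 3) ^ (m + 3) * hB - e3 + 2 * ((m : ℂ) + 3) * e2
    have keyn : ((m + 3) ^ (m + 3) : ℕ) = 2 * (2 * (m + 2)) ^ (m + 2) := by
      have hc : (((m + 3) ^ (m + 3) : ℕ) : ℂ) = ((2 * (2 * (m + 2)) ^ (m + 2) : ℕ) : ℂ) := by
        push_cast
        linear_combination key
      exact_mod_cast hc
    have hR : ((m : ℝ) + 3) ^ (m + 3) = 2 * (2 * ((m : ℝ) + 2)) ^ (m + 2) := by
      have := congrArg (fun n : ℕ => (n : ℝ)) keyn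
      push_cast at this
      linarith [this]
    exact absurd hR (ne_of_lt (aux_ineq m))
end

section
/- For every integer k ≥ 2, the polynomial A(x) = x^k - x^{k-1} - ... - 1 has exactly one positive real root ζ₀, and it satisfies 2 - 2^{-(k-1)} < ζ₀ < 2 - 2^{-k}. -/
open Polynomial Finset

theorem stmt_4 (k : ℕ) (hk : 2 ≤ k) :
    ∃ ζ : ℝ, 0 < ζ ∧ ((X : Polynomial ℝ) ^ k - ∑ j ∈ range k, X ^ j).IsRoot ζ ∧
      (∀ x : ℝ, 0 < x → ((X : Polynomial ℝ) ^ k - ∑ j ∈ range k, X ^ j).IsRoot x → x = ζ) ∧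
      2 - 1 / 2 ^ (k - 1) < ζ ∧ ζ < 2 - 1 / 2 ^ k := by
  have hk0 : 0 < k := by omega
  obtain ⟨f, hf⟩ : ∃ f : ℝ → ℝ, f = fun x => x ^ k - ∑ j ∈ range k, x ^ j := ⟨_, rfl⟩
  have hfeq : ∀ x : ℝ, f x = x ^ k - ∑ j ∈ range k, x ^ j := fun x => by rw [hf]
  have hroot : ∀ x : ℝ,
      ((X : Polynomial ℝ) ^ k - ∑ j ∈ range k, X ^ j).IsRoot x ↔ f x = 0 := by
    intro x
    rw [hfeq]
    simp [IsRoot, eval_finset_sum]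
  obtain ⟨a, ha⟩ : ∃ a : ℝ, a = 2 - 1 / 2 ^ (k - 1) := ⟨_, rfl⟩
  obtain ⟨b, hb⟩ : ∃ b : ℝ, b = 2 - 1 / 2 ^ k := ⟨_, rfl⟩
  -- basic numeric facts
  have h2k1 : (2:ℝ) ^ k = 2 * 2 ^ (k - 1) := by
    rw [← pow_succ']
    congr 1
    omega
  have hpow1 : (1:ℝ) < 2 ^ (k - 1) := by
    apply one_lt_pow₀ (by norm_num)
    omega
  have hpowk : (1:ℝ) < 2 ^ k := by
    apply one_lt_pow₀ (by norm_num)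
    omega
  have hpk_pos : (0:ℝ) < 2 ^ k := by positivity
  have hpk1_pos : (0:ℝ) < 2 ^ (k - 1) := by positivity
  have hdiv1 : (1:ℝ) / 2 ^ (k - 1) < 1 := by
    rw [div_lt_one hpk1_pos]; exact hpow1
  have hdivk : (1:ℝ) / 2 ^ k < 1 := by
    rw [div_lt_one hpk_pos]; exact hpowk
  have hdivk_pos : (0:ℝ) < 1 / 2 ^ k := by positivity
  have hdiv1_pos : (0:ℝ) < 1 / 2 ^ (k - 1) := by positivity
  have h2div : (2:ℝ) / 2 ^ k = 1 / 2 ^ (k - 1) := by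
    rw [h2k1]
    field_simp
  have ha1 : (1:ℝ) < a := by rw [ha]; linarith
  have hab : a < b := by
    rw [ha, hb]
    have : 1 / (2:ℝ) ^ k < 1 / 2 ^ (k - 1) := by
      apply one_div_lt_one_div_of_lt hpk1_pos
      rw [h2k1]; linarith
    linarith
  have hb2 : b < 2 := by rw [hb]; linarith
  -- key identity
  have hident : ∀ x : ℝ, (x - 1) * f x = x ^ k * (x - 2) + 1 := by
    intro x
    rw [hfeq, mul_sub, mul_comm (x - 1) (∑ j ∈ range k, x ^ j), geom_sum_mul]
    ring
  -- sign at b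
  have hfb : 0 < f b := by
    have hb0 : 0 < b := by linarith
    have hbk : b ^ k < 2 ^ k := pow_lt_pow_left₀ hb2 (le_of_lt hb0) (by omega)
    have hb2' : b - 2 = -(1 / 2 ^ k) := by rw [hb]; ring
    have hnum : 0 < b ^ k * (b - 2) + 1 := by
      rw [hb2', mul_neg, mul_one_div]
      have : b ^ k / 2 ^ k < 1 := by rw [div_lt_one hpk_pos]; exact hbk
      linarith
    nlinarith [hident b, ha1, hab]
  -- sign at a
  have hfa : f a < 0 := by
    have hhalf : (1:ℝ) / 2 < (a / 2) ^ k := by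
      have ha2 : a / 2 = 1 - 1 / 2 ^ k := by
        rw [ha, ← h2div]; field_simp
      rw [ha2]
      rcases eq_or_lt_of_le hk with hk2 | hk3
      · rw [← hk2]; norm_num
      · have hber := one_add_mul_le_pow (a := -(1 / (2:ℝ) ^ k)) (by linarith) k
        have h2k : (2 * k : ℝ) < 2 ^ k := by
          have hnat : 2 * k < 2 ^ k := by
            clear * - hk3
            induction k with
            | zero => omega
            | succ n ih =>
              rcases Nat.lt_or_ge n 3 with h | h
              · interval_cases n <;> first | omega | norm_num
              · have := ih (by omega)
                have h2 : 2 ^ (n + 1) = 2 * 2 ^ n := by ring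
                omega
          exact_mod_cast hnat
        have heq : 1 + (k:ℝ) * -(1 / 2 ^ k) = 1 - k / 2 ^ k := by ring
        rw [heq] at hber
        have hkk : (k:ℝ) / 2 ^ k < 1 / 2 := by
          rw [div_lt_div_iff₀ hpk_pos (by norm_num)]
          linarith
        calc (1:ℝ)/2 < 1 - (k:ℝ)/2^k := by linarith
          _ ≤ (1 - 1/2^k) ^ k := by
              have h3 : ((1:ℝ) - 1/2^k) = 1 + -(1/2^k) := by ring
              rw [h3]; exact hber
    have hnum : a ^ k * (a - 2) + 1 < 0 := by
      have ha2' : a - 2 = -(2 / 2 ^ k) := by rw [ha, ← h2div]; ring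
      have hak : a ^ k = 2 ^ k * (a / 2) ^ k := by
        rw [div_pow, mul_div_cancel₀]
        positivity
      rw [ha2', hak]
      have h4 : 2 ^ k * (a / 2) ^ k * -(2 / 2 ^ k) = -(2 * (a / 2) ^ k) := by
        field_simp
      rw [h4]
      linarith
    nlinarith [hident a, ha1]
  -- existence via IVT
  have hcont : Continuous f := by
    rw [hf]
    apply Continuous.sub (continuous_pow k)
    exact continuous_finset_sum _ (fun j _ => continuous_pow j)
  have hivt := intermediate_value_Ioo (le_of_lt hab) hcont.continuousOn
  have h0mem : (0:ℝ) ∈ Set.Ioo (f a) (f b) := ⟨hfa, hfb⟩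
  obtain ⟨ζ, hζmem, hζ0⟩ := hivt h0mem
  have hζa : a < ζ := hζmem.1
  have hζb : ζ < b := hζmem.2
  have hζpos : 0 < ζ := by linarith
  refine ⟨ζ, hζpos, (hroot ζ).2 hζ0, ?_, by rw [← ha]; exact hζa, by rw [← hb]; exact hζb⟩
  -- uniqueness
  have hS : ∀ x : ℝ, 0 < x → f x = 0 → (∑ i ∈ range k, (1 / x) ^ (i + 1)) = 1 := by
    intro x hx hfx
    have hxne : x ≠ 0 := ne_of_gt hx
    have hterm : ∀ i ∈ range k, x ^ k * (1 / x) ^ (i + 1) = x ^ (k - 1 - i) := by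
      intro i hi
      simp only [mem_range] at hi
      rw [div_pow, one_pow, mul_one_div, eq_comm, eq_div_iff (by positivity), ← pow_add]
      congr 1
      omega
    have hsum : x ^ k * (∑ i ∈ range k, (1 / x) ^ (i + 1)) = ∑ j ∈ range k, x ^ j := by
      rw [mul_sum, Finset.sum_congr rfl hterm]
      exact sum_range_reflect (fun j => x ^ j) k
    have hxk : x ^ k = ∑ j ∈ range k, x ^ j := by
      rw [hfeq] at hfx; linarith
    have hxkpos : (0:ℝ) < x ^ k := by positivity
    have h5 : x ^ k * (∑ i ∈ range k, (1 / x) ^ (i + 1)) = x ^ k * 1 := by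
      rw [hsum, mul_one, hxk]
    exact mul_left_cancel₀ (ne_of_gt hxkpos) h5
  have hanti : StrictAntiOn (fun x : ℝ => ∑ i ∈ range k, (1 / x) ^ (i + 1)) (Set.Ioi 0) := by
    intro x hx y hy hxy
    have hx0 : (0:ℝ) < x := hx
    have hy0 : (0:ℝ) < y := hy
    simp only
    apply Finset.sum_lt_sum_of_nonempty (by simp; omega)
    intro i _
    exact pow_lt_pow_left₀ (one_div_lt_one_div_of_lt hx0 hxy)
      (le_of_lt (by positivity)) (by omega)
  intro x hx hxroot
  have h1 := hS x hx ((hroot x).1 hxroot)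
  have h2 := hS ζ hζpos hζ0
  exact hanti.injOn hx hζpos (by rw [h1, h2])
end

section
/- For every integer k ≥ 2, A(x) = x^k - x^{k-1} - ... - 1 has no pure imaginary roots: if z = it with t real and t ≠ 0, then A(z) ≠ 0. -/
open Polynomial Finset

lemma re_mul_im_I_pow (k : ℕ) : (Complex.I ^ k).re * (Complex.I ^ k).im = 0 := by
  induction k with
  | zero => simp
  | succ n ih =>
    rw [pow_succ]
    simp only [Complex.mul_re, Complex.mul_im, Complex.I_re, Complex.I_im]
    ring_nf
    nlinarith [ih]

theorem stmt_5 (k : ℕ) (hk : 2 ≤ k) (t : ℝ) (ht : t ≠ 0) :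
    ¬ ((X : Polynomial ℂ) ^ k - ∑ j ∈ range k, X ^ j).IsRoot (t * Complex.I) := by
  intro h
  set z : ℂ := (t : ℂ) * Complex.I with hz
  have hre0 : z.re = 0 := by simp [hz]
  have him1 : z.im = t := by simp [hz]
  have hz0 : z ≠ 0 := by
    simp [hz, Complex.I_ne_zero, Complex.ofReal_ne_zero, ht]
  have heq : z ^ k = ∑ j ∈ range k, z ^ j := by
    have h' : eval z ((X : Polynomial ℂ) ^ k - ∑ j ∈ range k, X ^ j) = 0 := h
    simp [Polynomial.eval_finset_sum] at h'
    exact sub_eq_zero.mp h'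
  have h2 := geom_sum_mul z k
  rw [← heq] at h2
  have key : z ^ (k + 1) - 2 * z ^ k + 1 = 0 := by
    linear_combination h2
  have him := congrArg Complex.im key
  simp only [pow_succ, Complex.add_im, Complex.sub_im, Complex.mul_im, Complex.mul_re,
    Complex.one_im, Complex.zero_im, Complex.re_ofNat, Complex.im_ofNat, hre0, him1] at him
  -- him : (z^k).re * t + (z^k).im * 0 - (2 * (z^k).im + 0 * (z^k).re) + 0 = 0 (roughly)
  have hprod : (z ^ k).re * (z ^ k).im = 0 := by
    have hmul : z ^ k = (t ^ k : ℝ) * Complex.I ^ k := by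
      rw [hz, mul_pow, Complex.ofReal_pow]
    rw [hmul]
    simp only [Complex.mul_re, Complex.mul_im, Complex.ofReal_re, Complex.ofReal_im]
    linear_combination (t ^ k * t ^ k) * re_mul_im_I_pow k
  have hzk : z ^ k ≠ 0 := pow_ne_zero k hz0
  rcases mul_eq_zero.mp hprod with hre | him0
  · apply hzk
    apply Complex.ext hre
    simp only [Complex.zero_im]
    rw [hre] at him
    linarith
  · apply hzk
    apply Complex.ext _ him0
    simp only [Complex.zero_re]
    rw [him0] at him
    have : (z ^ k).re * t = 0 := by linarith
    rcases mul_eq_zero.mp this with h | h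
    · exact h
    · exact absurd h ht
end

section
/- For odd k ≥ 3, the polynomial A(x) = x^k - x^{k-1} - ... - 1 has exactly one real root (which is positive); for even k ≥ 2, A(x) has exactly two real roots, one positive and one negative. -/
open Polynomial Finset Set

noncomputable def fA (k : ℕ) : ℝ → ℝ := fun x => x ^ (k+1) - 2 * x ^ k + 1

lemma fA_cont (k : ℕ) : Continuous (fA k) := by unfold fA; continuity

lemma fA_hasDeriv (m : ℕ) (x : ℝ) :
    HasDerivAt (fA (m+1)) (x ^ m * (((m:ℝ)+2) * x - 2*((m:ℝ)+1))) x := by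
  have h1 := hasDerivAt_pow (m+2) x
  have h2 := (hasDerivAt_pow (m+1) x).const_mul (2:ℝ)
  have h : HasDerivAt (fA (m+1)) (↑(m + 2) * x ^ (m + 2 - 1) - 2 * (↑(m + 1) * x ^ (m + 1 - 1))) x := (h1.sub h2).add_const (1:ℝ)
  convert h using 1
  simp only [Nat.add_sub_cancel]
  push_cast
  ring

lemma root_iff (k : ℕ) (hk : 2 ≤ k) (y : ℝ) :
    ((X : Polynomial ℝ) ^ k - ∑ j ∈ range k, X ^ j).IsRoot y ↔ (fA k y = 0 ∧ y ≠ 1) := by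
  have heval : ((X : Polynomial ℝ) ^ k - ∑ j ∈ range k, X ^ j).eval y
      = y ^ k - ∑ j ∈ range k, y ^ j := by simp
  have hgeom : (∑ j ∈ range k, y ^ j) * (y - 1) = y ^ k - 1 := geom_sum_mul y k
  have hkey : (y ^ k - ∑ j ∈ range k, y ^ j) * (y - 1) = fA k y := by
    rw [sub_mul, hgeom, fA, pow_succ]; ring
  constructor
  · intro h
    rw [IsRoot, heval] at h
    refine ⟨by rw [← hkey, h, zero_mul], ?_⟩
    rintro rfl
    simp at h
    have : (k:ℝ) = 1 := by linarith
    norm_cast at this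
    omega
  · rintro ⟨hf, hy1⟩
    rw [IsRoot, heval]
    rw [fA] at hkey
    rw [fA] at hf
    rw [hf] at hkey
    rcases mul_eq_zero.mp hkey with h | h
    · exact h
    · exact absurd (by linarith [sub_eq_zero.mp h] : y = 1) hy1

theorem stmt_6 (k : ℕ) (hk : 2 ≤ k) :
    (Odd k → ∃ x : ℝ, 0 < x ∧ ((X : Polynomial ℝ) ^ k - ∑ j ∈ range k, X ^ j).IsRoot x ∧
        ∀ y : ℝ, ((X : Polynomial ℝ) ^ k - ∑ j ∈ range k, X ^ j).IsRoot y → y = x) ∧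
    (Even k → ∃ x y : ℝ, 0 < x ∧ y < 0 ∧
        ((X : Polynomial ℝ) ^ k - ∑ j ∈ range k, X ^ j).IsRoot x ∧
        ((X : Polynomial ℝ) ^ k - ∑ j ∈ range k, X ^ j).IsRoot y ∧
        ∀ z : ℝ, ((X : Polynomial ℝ) ^ k - ∑ j ∈ range k, X ^ j).IsRoot z → z = x ∨ z = y) := by
  obtain ⟨m, rfl⟩ : ∃ m, k = m + 1 := ⟨k - 1, by omega⟩
  have hm : 1 ≤ m := by omega
  set x0 : ℝ := (2 * (m:ℝ) + 2) / ((m:ℝ) + 2) with hx0def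
  have hmpos : (0:ℝ) < (m:ℝ) + 2 := by positivity
  have hx01 : 1 < x0 := by
    rw [hx0def, lt_div_iff₀ hmpos]
    have : (1:ℝ) ≤ (m:ℝ) := by exact_mod_cast hm
    linarith
  have hx02 : x0 < 2 := by
    rw [hx0def, div_lt_iff₀ hmpos]; linarith
  have hx0mul : ((m:ℝ) + 2) * x0 = 2 * (m:ℝ) + 2 := by
    rw [hx0def]; field_simp
  -- values
  have f1 : fA (m+1) 1 = 0 := by simp [fA]; norm_num
  have f0 : fA (m+1) 0 = 1 := by simp [fA]
  have f2 : fA (m+1) 2 = 1 := by rw [fA]; rw [pow_succ 2 (m+1)]; ring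
  -- monotonicity
  have SM_pos : StrictMonoOn (fA (m+1)) (Ici x0) := by
    apply strictMonoOn_of_deriv_pos (convex_Ici _) ((fA_cont _).continuousOn)
    intro x hx
    rw [interior_Ici] at hx
    have hx' : x0 < x := hx
    rw [(fA_hasDeriv m x).deriv]
    have hxpos : 0 < x := by linarith
    apply mul_pos (pow_pos hxpos m)
    have := mul_lt_mul_of_pos_left hx' hmpos
    rw [hx0mul] at this
    linarith
  have SA_mid : StrictAntiOn (fA (m+1)) (Icc 0 x0) := by
    apply strictAntiOn_of_deriv_neg (convex_Icc _ _) ((fA_cont _).continuousOn)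
    intro x hx
    rw [interior_Icc] at hx
    rw [(fA_hasDeriv m x).deriv]
    apply mul_neg_of_pos_of_neg (pow_pos hx.1 m)
    have := mul_lt_mul_of_pos_left hx.2 hmpos
    rw [hx0mul] at this
    linarith
  have fx0neg : fA (m+1) x0 < 0 := by
    have := SA_mid (mem_Icc.mpr ⟨by norm_num, le_of_lt hx01⟩)
      (mem_Icc.mpr ⟨by linarith, le_refl _⟩) hx01
    rw [f1] at this; exact this
  -- positive root
  have hsub := intermediate_value_Ioo (le_of_lt hx02) ((fA_cont (m+1)).continuousOn)
  obtain ⟨a, ha, hfa⟩ := hsub (show (0:ℝ) ∈ Ioo (fA (m+1) x0) (fA (m+1) 2) by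
    rw [f2]; exact ⟨fx0neg, by norm_num⟩)
  have ha1 : 1 < a := lt_trans hx01 ha.1
  have haroot : ((X : Polynomial ℝ) ^ (m+1) - ∑ j ∈ range (m+1), X ^ j).IsRoot a :=
    (root_iff (m+1) hk a).mpr ⟨hfa, by linarith⟩
  -- uniqueness among positive roots
  have hpos_unique : ∀ y : ℝ, 0 < y → fA (m+1) y = 0 → y ≠ 1 → y = a := by
    intro y hy hfy hy1
    rcases le_total y x0 with h | h
    · exfalso
      have := SA_mid.injOn (mem_Icc.mpr ⟨le_of_lt hy, h⟩)
        (mem_Icc.mpr ⟨by norm_num, le_of_lt hx01⟩) (by rw [hfy, f1])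
      exact hy1 this
    · exact SM_pos.injOn (mem_Ici.mpr h) (mem_Ici.mpr (le_of_lt ha.1)) (by rw [hfy, hfa])
  constructor
  · -- odd case
    intro hodd
    have hmeven : Even m := Nat.not_odd_iff_even.mp (Nat.odd_add_one.mp hodd)
    refine ⟨a, by linarith, haroot, ?_⟩
    intro y hy
    obtain ⟨hfy, hy1⟩ := (root_iff (m+1) hk y).mp hy
    rcases lt_trichotomy y 0 with h | h | h
    · exfalso
      have he2 : Even (m+1+1) := (hmeven.add_one).add_one
      have ho1 : Odd (m+1) := hmeven.add_one
      have h1 : 0 < y ^ (m+1+1) := he2.pow_pos (ne_of_lt h)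
      have h2 : y ^ (m+1) < 0 := ho1.pow_neg h
      simp only [fA] at hfy
      linarith
    · rw [h, f0] at hfy; norm_num at hfy
    · exact hpos_unique y h hfy hy1
  · -- even case
    intro heven
    have hmodd : Odd m := Nat.not_even_iff_odd.mp (Nat.even_add_one.mp heven)
    -- negative root
    have fm1 : fA (m+1) (-1) = -2 := by
      have ho2 : Odd (m+1+1) := (hmodd.add_one).add_one
      have he1 : Even (m+1) := hmodd.add_one
      simp only [fA]
      rw [ho2.neg_one_pow, he1.neg_one_pow]
      ring
    have SM_neg : StrictMonoOn (fA (m+1)) (Iic 0) := by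
      apply strictMonoOn_of_deriv_pos (convex_Iic _) ((fA_cont _).continuousOn)
      intro x hx
      rw [interior_Iic] at hx
      have hx' : x < 0 := hx
      rw [(fA_hasDeriv m x).deriv]
      have h1 : x ^ m < 0 := hmodd.pow_neg hx'
      have hm0 : (0:ℝ) ≤ (m:ℝ) := by positivity
      apply mul_pos_of_neg_of_neg h1
      have := mul_neg_of_pos_of_neg hmpos hx'
      linarith
    obtain ⟨b, hb, hfb⟩ := intermediate_value_Ioo (by norm_num : (-1:ℝ) ≤ 0)
      ((fA_cont (m+1)).continuousOn)
      (show (0:ℝ) ∈ Ioo (fA (m+1) (-1)) (fA (m+1) 0) by rw [fm1, f0]; norm_num)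
    have hbroot : ((X : Polynomial ℝ) ^ (m+1) - ∑ j ∈ range (m+1), X ^ j).IsRoot b :=
      (root_iff (m+1) hk b).mpr ⟨hfb, by rcases hb with ⟨_, h⟩; linarith⟩
    refine ⟨a, b, by linarith, hb.2, haroot, hbroot, ?_⟩
    intro z hz
    obtain ⟨hfz, hz1⟩ := (root_iff (m+1) hk z).mp hz
    rcases lt_trichotomy z 0 with h | h | h
    · right
      exact SM_neg.injOn (mem_Iic.mpr (le_of_lt h)) (mem_Iic.mpr (le_of_lt hb.2))
        (by rw [hfz, hfb])
    · exfalso; rw [h, f0] at hfz; norm_num at hfz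
    · left; exact hpos_unique z h hfz hz1
end

section
/- For every integer k ≥ 2, every complex root ζ of A(x) = x^k - x^{k-1} - ... - 1 other than the unique positive real root satisfies 3^{-1/k} < |ζ| < 1. -/
open Polynomial Finset

/-- Uniqueness of the positive real root of `x^k - ∑_{j<k} x^j`. -/
lemma stmt_7_unique (k : ℕ) (hk : 2 ≤ k) {s t : ℝ} (hs : 0 < s) (hst : s < t)
    (hrs : s ^ k = ∑ j ∈ range k, s ^ j) (hrt : t ^ k = ∑ j ∈ range k, t ^ j) : False := by
  have ht : 0 < t := hs.trans hst
  have key : ∀ u : ℝ, 0 < u → u ^ k = ∑ j ∈ range k, u ^ j →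
      (1 : ℝ) = ∑ j ∈ range k, (u⁻¹) ^ (k - j) := by
    intro u hu hru
    have huk : u ^ k ≠ 0 := by positivity
    have h1 : ∀ j ∈ range k, (u⁻¹) ^ (k - j) = u ^ j / u ^ k := by
      intro j hj
      rw [mem_range] at hj
      rw [inv_pow, inv_eq_one_div, div_eq_div_iff (by positivity) huk, one_mul, ← pow_add]
      congr 1
      omega
    rw [Finset.sum_congr rfl h1, ← Finset.sum_div, ← hru, div_self huk]
  have h1 := key s hs hrs
  have h2 := key t ht hrt
  have hlt : ∑ j ∈ range k, (t⁻¹) ^ (k - j) < ∑ j ∈ range k, (s⁻¹) ^ (k - j) := by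
    apply Finset.sum_lt_sum_of_nonempty
    · exact Finset.nonempty_range_iff.mpr (by omega)
    · intro j hj
      rw [mem_range] at hj
      have hinv : t⁻¹ < s⁻¹ := by
        rw [inv_lt_inv₀ ht hs]; exact hst
      exact pow_lt_pow_left₀ hinv (by positivity) (by omega)
  rw [← h1, ← h2] at hlt
  exact lt_irrefl _ hlt

theorem stmt_7 (k : ℕ) (hk : 2 ≤ k) (ζ₀ : ℝ) (h₀ : 0 < ζ₀)
    (hroot₀ : ((X : Polynomial ℝ) ^ k - ∑ j ∈ range k, X ^ j).IsRoot ζ₀)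
    (ζ : ℂ) (hroot : ((X : Polynomial ℂ) ^ k - ∑ j ∈ range k, X ^ j).IsRoot ζ)
    (hne : ζ ≠ (ζ₀ : ℂ)) :
    (3 : ℝ) ^ (-(1 : ℝ) / k) < ‖ζ‖ ∧ ‖ζ‖ < 1 := by
  have hk0 : 0 < k := by omega
  -- root equations
  have hA : ζ ^ k = ∑ j ∈ range k, ζ ^ j := by
    have h := hroot
    simp only [IsRoot.def, eval_sub, eval_pow, eval_finset_sum, eval_X] at h
    exact sub_eq_zero.mp h
  have hA₀ : ζ₀ ^ k = ∑ j ∈ range k, ζ₀ ^ j := by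
    have h := hroot₀
    simp only [IsRoot.def, eval_sub, eval_pow, eval_finset_sum, eval_X] at h
    exact sub_eq_zero.mp h
  -- key complex identity : ζ^k (2 - ζ) = 1
  have hgs := geom_sum_mul ζ k
  have hBζ : ζ ^ k * (2 - ζ) = 1 := by linear_combination (1 - ζ) * hA - hgs
  -- ζ is not a nonnegative real
  have hnotnonneg : ¬ (ζ.im = 0 ∧ 0 ≤ ζ.re) := by
    rintro ⟨him, hre⟩
    have hζeq : ζ = ((ζ.re : ℝ) : ℂ) := Complex.ext rfl (by simp [him])
    set t := ζ.re with htdef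
    have ht_root : t ^ k = ∑ j ∈ range k, t ^ j := by
      have h := hA
      rw [hζeq] at h
      have : ((t ^ k : ℝ) : ℂ) = ((∑ j ∈ range k, t ^ j : ℝ) : ℂ) := by
        push_cast
        exact h
      exact_mod_cast this
    have htne : t ≠ 0 := by
      intro h0
      rw [h0] at ht_root
      rw [zero_pow (by omega : k ≠ 0)] at ht_root
      have : ∑ j ∈ range k, (0 : ℝ) ^ j = 1 := by
        rw [Finset.sum_eq_single 0]
        · norm_num
        · intro j hj hj0
          exact zero_pow hj0
        · intro h
          exact absurd (Finset.mem_range.mpr hk0) h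
      rw [this] at ht_root
      norm_num at ht_root
    have ht0 : 0 < t := lt_of_le_of_ne hre (Ne.symm htne)
    have htne₀ : t ≠ ζ₀ := by
      intro h
      exact hne (by rw [hζeq, h])
    rcases lt_trichotomy t ζ₀ with h | h | h
    · exact stmt_7_unique k hk ht0 h ht_root hA₀
    · exact htne₀ h
    · exact stmt_7_unique k hk h₀ h hA₀ ht_root
  -- consequences
  have hζne : ζ ≠ 0 := by
    intro h
    exact hnotnonneg (by simp [h])
  set r := ‖ζ‖ with hrdef
  have hr : 0 < r := by
    simpa [hrdef] using (norm_pos_iff.mpr hζne)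
  have hrk : (0:ℝ) < r ^ k := pow_pos hr k
  have hre_lt : ζ.re < r := by
    rcases lt_or_ge ζ.re 0 with h | h
    · exact h.trans hr
    · have h2 : ζ.im ≠ 0 := by
        intro him
        exact hnotnonneg ⟨him, h⟩
      calc ζ.re ≤ |ζ.re| := le_abs_self _
        _ < r := (Complex.abs_re_lt_norm).mpr h2
  have hsq : r ^ 2 = ζ.re ^ 2 + ζ.im ^ 2 := by
    rw [hrdef, Complex.sq_norm, Complex.normSq_apply]; ring
  -- |2 - ζ| facts
  have habs_eq : r ^ k * ‖2 - ζ‖ = 1 := by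
    have h := congrArg norm hBζ
    simpa [norm_mul, norm_pow] using h
  have hc_nonneg : 0 ≤ ‖2 - ζ‖ := norm_nonneg _
  have hcsq : (‖2 - ζ‖) ^ 2 = (2 - ζ.re) ^ 2 + ζ.im ^ 2 := by
    rw [Complex.sq_norm, Complex.normSq_apply]
    simp [Complex.sub_re, Complex.sub_im]
    ring
  have hstrict2 : 2 - r < ‖2 - ζ‖ := by
    nlinarith [hre_lt, hc_nonneg, hr]
  have hfr_pos : 0 < r ^ (k + 1) - 2 * r ^ k + 1 := by
    have h1 : r ^ k * (2 - r) < r ^ k * ‖2 - ζ‖ :=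
      mul_lt_mul_of_pos_left hstrict2 hrk
    rw [habs_eq] at h1
    have h2 : r ^ (k+1) = r ^ k * r := pow_succ r k
    nlinarith
  -- upper bound : r < 1
  have hub : r < 1 := by
    by_contra hcon
    push_neg at hcon
    -- strict triangle inequality gives r^k < ∑ r^j
    have hsum : r ^ k < ∑ j ∈ range k, r ^ j := by
      obtain ⟨m, rfl⟩ : ∃ m, k = m + 2 := ⟨k - 2, by omega⟩
      have hsplitC : ∑ j ∈ range (m + 2), ζ ^ j
          = (∑ j ∈ range m, ζ ^ (j + 1 + 1)) + (1 + ζ) := by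
        rw [Finset.sum_range_succ' _ (m + 1), Finset.sum_range_succ' _ m]
        push_cast
        ring
      have hsplitR : ∑ j ∈ range (m + 2), r ^ j
          = (∑ j ∈ range m, r ^ (j + 1 + 1)) + (1 + r) := by
        rw [Finset.sum_range_succ' _ (m + 1), Finset.sum_range_succ' _ m]
        push_cast
        ring
      have h1plus : ‖1 + ζ‖ < 1 + r := by
        have h1sq : (‖1 + ζ‖) ^ 2 = (1 + ζ.re) ^ 2 + ζ.im ^ 2 := by
          rw [Complex.sq_norm, Complex.normSq_apply]
          simp [Complex.add_re, Complex.add_im]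
          ring
        nlinarith [norm_nonneg (1 + ζ), hre_lt, hr]
      have htri : ‖∑ j ∈ range (m + 2), ζ ^ j‖
          ≤ (∑ j ∈ range m, r ^ (j + 1 + 1)) + ‖1 + ζ‖ := by
        rw [hsplitC]
        calc ‖(∑ j ∈ range m, ζ ^ (j + 1 + 1)) + (1 + ζ)‖
            ≤ ‖∑ j ∈ range m, ζ ^ (j + 1 + 1)‖ + ‖1 + ζ‖ :=
              norm_add_le _ _
          _ ≤ (∑ j ∈ range m, r ^ (j + 1 + 1)) + ‖1 + ζ‖ := by
              gcongr
              calc ‖∑ j ∈ range m, ζ ^ (j + 1 + 1)‖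
                  ≤ ∑ j ∈ range m, ‖ζ ^ (j + 1 + 1)‖ :=
                    norm_sum_le _ _
                _ = ∑ j ∈ range m, r ^ (j + 1 + 1) := by
                    apply Finset.sum_congr rfl
                    intro j _
                    rw [norm_pow]
      have hlhs : r ^ (m + 2) = ‖∑ j ∈ range (m + 2), ζ ^ j‖ := by
        rw [← hA, norm_pow]
      rw [hlhs, hsplitR]
      calc ‖∑ j ∈ range (m + 2), ζ ^ j‖
          ≤ (∑ j ∈ range m, r ^ (j + 1 + 1)) + ‖1 + ζ‖ := htri
        _ < (∑ j ∈ range m, r ^ (j + 1 + 1)) + (1 + r) := by linarith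
    -- multiply by (r - 1) ≥ 0
    have hgsr := geom_sum_mul r k
    have hmul : (r - 1) * (r ^ k - ∑ j ∈ range k, r ^ j) ≤ 0 :=
      mul_nonpos_of_nonneg_of_nonpos (by linarith) (by linarith)
    have hident : (r - 1) * (r ^ k - ∑ j ∈ range k, r ^ j)
        = r ^ (k + 1) - 2 * r ^ k + 1 := by
      have h2 : r ^ (k+1) = r ^ k * r := pow_succ r k
      linear_combination (-1 : ℝ) * hgsr - h2
    rw [hident] at hmul
    linarith
  -- lower bound
  have hclt : ‖2 - ζ‖ ≤ 2 + r := by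
    calc ‖2 - ζ‖ ≤ ‖(2 : ℂ)‖ + ‖ζ‖ := by
          exact norm_sub_le _ _
      _ = 2 + r := by simp [hrdef]
  have h13 : 1 / 3 < r ^ k := by
    nlinarith [habs_eq, hclt, hrk, hub]
  have h3k : ((3 : ℝ) ^ (-(1 : ℝ) / k)) ^ k = 1 / 3 := by
    rw [← Real.rpow_natCast ((3 : ℝ) ^ (-(1 : ℝ) / (k:ℝ))) k,
      ← Real.rpow_mul (by norm_num : (0:ℝ) ≤ 3)]
    rw [show (-(1 : ℝ) / (k:ℝ)) * (k:ℕ) = -1 by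
      field_simp]
    norm_num [Real.rpow_neg_one]
  constructor
  · apply lt_of_pow_lt_pow_left₀ k hr.le
    rw [h3k]
    exact h13
  · exact hub
end

section
/- For every integer k ≥ 2 and any two distinct complex roots ζ₁, ζ₂ of A(x) = x^k - x^{k-1} - ... - 1, one has |ζ₁| = |ζ₂| if and only if ζ₁ is the complex conjugate of ζ₂. -/
open Polynomial Finset

theorem stmt_8 (k : ℕ) (hk : 2 ≤ k) (ζ₁ ζ₂ : ℂ)
    (h₁ : ((X : Polynomial ℂ) ^ k - ∑ j ∈ range k, X ^ j).IsRoot ζ₁)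
    (h₂ : ((X : Polynomial ℂ) ^ k - ∑ j ∈ range k, X ^ j).IsRoot ζ₂)
    (hne : ζ₁ ≠ ζ₂) :
    ‖ζ₁‖ = ‖ζ₂‖ ↔ ζ₁ = (starRingEnd ℂ) ζ₂ := by
  have key : ∀ ζ : ℂ, ((X : Polynomial ℂ) ^ k - ∑ j ∈ range k, X ^ j).IsRoot ζ →
      ζ ^ k * (2 - ζ) = 1 := by
    intro ζ hζ
    have h : ζ ^ k - ∑ j ∈ range k, ζ ^ j = 0 := by
      simpa [Polynomial.IsRoot, Polynomial.eval_finset_sum] using hζ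
    have hg : (∑ j ∈ range k, ζ ^ j) * (ζ - 1) = ζ ^ k - 1 := geom_sum_mul ζ k
    linear_combination (1 - ζ) * h - hg
  have k1 := key ζ₁ h₁
  have k2 := key ζ₂ h₂
  have a1 : ‖ζ₁‖ ^ k * ‖2 - ζ₁‖ = 1 := by
    have := congrArg norm k1
    simpa [norm_mul, norm_pow] using this
  have a2 : ‖ζ₂‖ ^ k * ‖2 - ζ₂‖ = 1 := by
    have := congrArg norm k2
    simpa [norm_mul, norm_pow] using this
  constructor
  · intro hab
    have hpos : ‖ζ₁‖ ^ k ≠ 0 := by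
      intro h0
      rw [h0, zero_mul] at a1
      exact zero_ne_one a1
    have h2abs : ‖2 - ζ₁‖ = ‖2 - ζ₂‖ := by
      rw [hab] at a1
      have := a1.trans a2.symm
      rw [hab] at hpos
      exact mul_left_cancel₀ hpos this
    have n1 : Complex.normSq ζ₁ = Complex.normSq ζ₂ := by
      rw [← Complex.sq_norm, ← Complex.sq_norm, hab]
    have n2 : Complex.normSq (2 - ζ₁) = Complex.normSq (2 - ζ₂) := by
      rw [← Complex.sq_norm, ← Complex.sq_norm, h2abs]
    have n1' : ζ₁.re * ζ₁.re + ζ₁.im * ζ₁.im = ζ₂.re * ζ₂.re + ζ₂.im * ζ₂.im := by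
      simpa [Complex.normSq_apply] using n1
    have n2' : (2 - ζ₁.re) * (2 - ζ₁.re) + ζ₁.im * ζ₁.im
        = (2 - ζ₂.re) * (2 - ζ₂.re) + ζ₂.im * ζ₂.im := by
      simpa [Complex.normSq_apply, Complex.sub_re, Complex.sub_im, neg_mul_neg] using n2
    have hre : ζ₁.re = ζ₂.re := by linear_combination (n1' - n2') / 4
    have him2 : ζ₁.im * ζ₁.im = ζ₂.im * ζ₂.im := by
      linear_combination n1' - (ζ₁.re + ζ₂.re) * hre
    rcases mul_self_eq_mul_self_iff.mp him2 with him | him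
    · exact absurd (Complex.ext hre him) hne
    · exact Complex.ext (by simpa using hre) (by simpa using him)
  · intro h
    rw [h, Complex.norm_conj]
end

section
/- For every integer k ≥ 2 and any two distinct complex roots ζ₁, ζ₂ of A(x) = x^k - x^{k-1} - ... - 1, Re(ζ₁) < Re(ζ₂) holds if and only if |ζ₁| < |ζ₂|. -/
open Polynomial Finset

lemma aux_mono9 (k : ℕ) (hk : 1 ≤ k) {a b : ℝ} (ha : 0 < a) (hb : 0 < b) (hab : a < b) :
    a^2 - (a^(2*k))⁻¹ < b^2 - (b^(2*k))⁻¹ := by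
  have h1 : a^2 < b^2 := by nlinarith
  have h2 : (b^(2*k))⁻¹ < (a^(2*k))⁻¹ := by
    have hp : a^(2*k) < b^(2*k) := pow_lt_pow_left₀ hab ha.le (by omega)
    exact inv_strictAnti₀ (by positivity) hp
  linarith

lemma aux_root9 (k : ℕ) (hk : 2 ≤ k) (ζ : ℂ)
    (h : ((X : Polynomial ℂ) ^ k - ∑ j ∈ range k, X ^ j).IsRoot ζ) :
    0 < ‖ζ‖ ∧
    4 * ζ.re = 4 + (‖ζ‖)^2 - ((‖ζ‖)^(2*k))⁻¹ := by
  have h' : ζ ^ k - ∑ j ∈ range k, ζ ^ j = 0 := by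
    have := h
    simpa only [Polynomial.IsRoot, eval_sub, eval_pow, eval_X, eval_finset_sum] using this
  have he : ζ ^ k = ∑ j ∈ range k, ζ ^ j := sub_eq_zero.mp h'
  have hgeom : (∑ j ∈ range k, ζ ^ j) * (ζ - 1) = ζ ^ k - 1 := geom_sum_mul ζ k
  have hkey : ζ ^ k * (2 - ζ) = 1 := by
    linear_combination (1 - ζ) * he - hgeom
  have hz : ζ ≠ 0 := by
    intro h0
    rw [h0, zero_pow (by omega), zero_mul] at hkey
    exact zero_ne_one hkey
  have hpos : 0 < ‖ζ‖ := by
    simpa [norm_pos_iff] using hz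
  refine ⟨hpos, ?_⟩
  have habs : (‖ζ‖) ^ k * ‖2 - ζ‖ = 1 := by
    rw [← norm_pow, ← norm_mul, hkey, norm_one]
  have h2k : (‖2 - ζ‖)^2 = ((‖ζ‖)^(2*k))⁻¹ := by
    have hq : ‖2 - ζ‖ = ((‖ζ‖) ^ k)⁻¹ := by
      field_simp at habs ⊢
      linarith [habs]
    rw [hq, inv_pow, ← pow_mul, mul_comm k 2]
  have hs2 : (‖2 - ζ‖)^2 = 4 - 4*ζ.re + (‖ζ‖)^2 := by
    rw [Complex.sq_norm, Complex.sq_norm, Complex.normSq_apply, Complex.normSq_apply,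
      Complex.sub_re, Complex.sub_im]
    simp
    ring
  rw [← h2k]
  linarith [hs2]

theorem stmt_9 (k : ℕ) (hk : 2 ≤ k) (ζ₁ ζ₂ : ℂ)
    (h₁ : ((X : Polynomial ℂ) ^ k - ∑ j ∈ range k, X ^ j).IsRoot ζ₁)
    (h₂ : ((X : Polynomial ℂ) ^ k - ∑ j ∈ range k, X ^ j).IsRoot ζ₂)
    (hne : ζ₁ ≠ ζ₂) :
    ζ₁.re < ζ₂.re ↔ ‖ζ₁‖ < ‖ζ₂‖ := by
  obtain ⟨hp1, he1⟩ := aux_root9 k hk ζ₁ h₁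
  obtain ⟨hp2, he2⟩ := aux_root9 k hk ζ₂ h₂
  set a := ‖ζ₁‖
  set b := ‖ζ₂‖
  constructor
  · intro h
    rcases lt_trichotomy a b with hab | hab | hab
    · exact hab
    · exfalso; rw [hab] at he1; linarith
    · exfalso
      have := aux_mono9 k (by omega) hp2 hp1 hab
      linarith
  · intro h
    have := aux_mono9 k (by omega) hp1 hp2 h
    linarith
end

section
/- Let ζ₀,…,ζ_{k-1} be the (distinct) complex roots of A(x) = x^k - x^{k-1} - ... - 1, and let F_k(n) satisfy F_k(n) = F_k(n-1)+...+F_k(n-k) with F_k(0)=...=F_k(k-2)=0, F_k(k-1)=1. Then for all n ≥ 0, F_k(n) = ∑_{j=0}^{k-1} ((ζ_j - 1)/((k+1)ζ_j - 2k)) · ζ_j^{n-k+1}. -/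
open Finset

section Aux
open Polynomial

private lemma zeta_ne_zero' (k : ℕ) (hk : 2 ≤ k) (ζ : Fin k → ℂ)
    (hroot : ∀ j, (ζ j) ^ k = ∑ i ∈ range k, (ζ j) ^ i) (j : Fin k) : ζ j ≠ 0 := by
  intro h
  have := hroot j
  rw [h, zero_pow (by omega)] at this
  have h2 : ∑ i ∈ range k, (0:ℂ) ^ i = 1 := by
    rw [Finset.sum_eq_single 0]
    · simp
    · intro b _ hb; exact zero_pow hb
    · intro h; exact absurd (Finset.mem_range.mpr (by omega)) h
  rw [h2] at this; exact one_ne_zero this.symm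

private lemma zeta_ne_one' (k : ℕ) (hk : 2 ≤ k) (ζ : Fin k → ℂ)
    (hroot : ∀ j, (ζ j) ^ k = ∑ i ∈ range k, (ζ j) ^ i) (j : Fin k) : ζ j ≠ 1 := by
  intro h
  have := hroot j
  rw [h] at this
  simp only [one_pow, Finset.sum_const, Finset.card_range, nsmul_eq_mul, mul_one] at this
  have : (k : ℂ) = 1 := this.symm
  have : k = 1 := by exact_mod_cast this
  omega

private lemma coeff_lagrange_basis' (k : ℕ) (ζ : Fin k → ℂ) (hinj : Function.Injective ζ)
    (j : Fin k) :
    (Lagrange.basis Finset.univ ζ j).coeff (k - 1) = Lagrange.nodalWeight Finset.univ ζ j := by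
  have hvs : Set.InjOn ζ (Finset.univ : Finset (Fin k)) := fun a _ b _ h => hinj h
  have hdeg : (Lagrange.basis Finset.univ ζ j).natDegree = k - 1 := by
    rw [Lagrange.natDegree_basis hvs (mem_univ j)]
    simp
  rw [← hdeg, Polynomial.coeff_natDegree, Lagrange.basis, Polynomial.leadingCoeff_prod,
    Lagrange.nodalWeight]
  refine Finset.prod_congr rfl fun i hi => ?_
  rw [Lagrange.basisDivisor, leadingCoeff_mul, leadingCoeff_C, (monic_X_sub_C (ζ i)).leadingCoeff,
    mul_one]

private lemma vandermonde_residue' (k : ℕ) (ζ : Fin k → ℂ) (hinj : Function.Injective ζ)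
    (m : ℕ) (hm : m < k) :
    ∑ j : Fin k, ζ j ^ m * Lagrange.nodalWeight Finset.univ ζ j
      = if m = k - 1 then 1 else 0 := by
  classical
  have hvs : Set.InjOn ζ (Finset.univ : Finset (Fin k)) := fun a _ b _ h => hinj h
  have hcard : (Finset.univ : Finset (Fin k)).card = k := by simp
  have hdeg : ((X : ℂ[X]) ^ m).degree < (Finset.univ : Finset (Fin k)).card := by
    rw [Polynomial.degree_X_pow, hcard]; exact_mod_cast hm
  have hinterp := Lagrange.eq_interpolate (v := ζ) hvs hdeg
  have h2 := congrArg (fun p => Polynomial.coeff p (k - 1)) hinterp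
  simp only [Lagrange.interpolate_apply, Polynomial.finset_sum_coeff, Polynomial.coeff_C_mul,
    Polynomial.eval_pow, Polynomial.eval_X, Polynomial.coeff_X_pow] at h2
  rw [Finset.sum_congr rfl fun j _ => by rw [coeff_lagrange_basis' k ζ hinj j]] at h2
  rw [← h2]
  by_cases h : m = k - 1 <;> simp [h, eq_comm]

private lemma poly_eq_nodal' (k : ℕ) (ζ : Fin k → ℂ)
    (hroot : ∀ j, (ζ j) ^ k = ∑ i ∈ range k, (ζ j) ^ i)
    (hinj : Function.Injective ζ) :
    (X ^ k - ∑ i ∈ range k, X ^ i : ℂ[X]) = Lagrange.nodal Finset.univ ζ := by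
  classical
  have hvs : Set.InjOn ζ (Finset.univ : Finset (Fin k)) := fun a _ b _ h => hinj h
  have hcard : (Finset.univ : Finset (Fin k)).card = k := by simp
  have hS : (∑ i ∈ range k, (X:ℂ[X])^i).degree < ((k:ℕ) : WithBot ℕ) := by
    refine lt_of_le_of_lt (Polynomial.degree_sum_le _ _) ?_
    rw [Finset.sup_lt_iff (by exact_mod_cast WithBot.bot_lt_coe k)]
    intro i hi
    rw [Polynomial.degree_X_pow]
    exact_mod_cast Finset.mem_range.mp hi
  have hXk : ((X:ℂ[X])^k).degree = (k : WithBot ℕ) := Polynomial.degree_X_pow k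
  have hPdeg : (X ^ k - ∑ i ∈ range k, X ^ i : ℂ[X]).degree = (k : WithBot ℕ) := by
    rw [Polynomial.degree_sub_eq_left_of_degree_lt (by rw [hXk]; exact hS), hXk]
  have hPlc : (X ^ k - ∑ i ∈ range k, X ^ i : ℂ[X]).leadingCoeff = 1 := by
    rw [Polynomial.leadingCoeff_sub_of_degree_lt (by rw [hXk]; exact hS)]
    exact Polynomial.monic_X_pow k
  have hNdeg : (Lagrange.nodal Finset.univ ζ).degree = (k : WithBot ℕ) := by
    rw [Lagrange.degree_nodal, hcard]
  refine Polynomial.eq_of_degree_sub_lt_of_eval_index_eq Finset.univ hvs ?_ ?_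
  · rw [hcard]
    have := Polynomial.degree_sub_lt (hPdeg.trans hNdeg.symm)
      (fun h => by simp [h] at hPdeg) (by rw [hPlc, Lagrange.nodal_monic])
    rwa [hPdeg] at this
  · intro i _
    rw [Lagrange.eval_nodal_at_node (Finset.mem_univ i)]
    simp only [Polynomial.eval_sub, Polynomial.eval_pow, Polynomial.eval_X,
      Polynomial.eval_finset_sum]
    simpa using sub_eq_zero_of_eq (hroot i)

private lemma coeff_eq' (k : ℕ) (hk : 2 ≤ k) (ζ : Fin k → ℂ)
    (hroot : ∀ j, (ζ j) ^ k = ∑ i ∈ range k, (ζ j) ^ i)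
    (hinj : Function.Injective ζ) (j : Fin k) :
    (ζ j - 1) / ((k + 1) * ζ j - 2 * k)
      = ζ j ^ (k - 1) * Lagrange.nodalWeight Finset.univ ζ j := by
  classical
  have hPnodal := poly_eq_nodal' k ζ hroot hinj
  set N : ℂ[X] := Lagrange.nodal Finset.univ ζ with hN
  set D : ℂ := eval (ζ j) (derivative N) with hD
  have hDval : D = ∏ i ∈ Finset.univ.erase j, (ζ j - ζ i) := by
    rw [hD, hN, Lagrange.eval_nodal_derivative_eval_node_eq (Finset.mem_univ j),
      Lagrange.eval_nodal]
  have hDne : D ≠ 0 := by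
    rw [hDval]
    exact Finset.prod_ne_zero_iff.mpr fun i hi =>
      sub_ne_zero_of_ne fun h => (Finset.mem_erase.mp hi).1 (hinj h.symm)
  have hw : Lagrange.nodalWeight Finset.univ ζ j = D⁻¹ := by
    rw [hD, hN, Lagrange.nodalWeight_eq_eval_derivative_nodal (Finset.mem_univ j)]
  have hxP : ((X : ℂ[X]) - 1) * N = X ^ (k + 1) - 2 * X ^ k + 1 := by
    have hg : (∑ i ∈ range k, (X:ℂ[X])^i) * (X - 1) = X ^ k - 1 := geom_sum_mul X k
    rw [← hPnodal]
    linear_combination -hg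
  have hPeval : eval (ζ j) N = 0 := by
    rw [hN]; exact Lagrange.eval_nodal_at_node (Finset.mem_univ j)
  have hder := congrArg (fun p => eval (ζ j) (derivative p)) hxP
  simp only [derivative_mul, derivative_sub, derivative_add, derivative_one, derivative_X,
    Polynomial.derivative_X_pow, Polynomial.derivative_ofNat, eval_add, eval_sub, eval_mul,
    eval_one, eval_X, eval_pow, eval_natCast, eval_C, eval_zero, eval_ofNat, sub_zero, one_mul,
    hPeval, mul_zero, zero_mul, zero_add, add_zero, Nat.cast_add, Nat.cast_one] at hder
  rw [show k + 1 - 1 = k from by omega] at hder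
  have e2 : ζ j ^ k = ζ j ^ (k - 1) * ζ j := by
    rw [← pow_succ]; congr 1; omega
  have hkey : (ζ j - 1) * D = ζ j ^ (k - 1) * ((k + 1) * ζ j - 2 * k) := by
    rw [← hD] at hder
    linear_combination hder + ((k:ℂ) + 1) * e2
  have hζ1 := zeta_ne_one' k hk ζ hroot j
  have hden : (k + 1) * ζ j - 2 * k ≠ 0 := by
    intro h
    rw [h, mul_zero] at hkey
    exact (mul_ne_zero (sub_ne_zero_of_ne hζ1) hDne) hkey
  rw [hw]
  rw [← div_eq_mul_inv, div_eq_div_iff hden hDne]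
  linear_combination hkey

end Aux

theorem stmt_11 (k : ℕ) (hk : 2 ≤ k) (ζ : Fin k → ℂ)
    (hroot : ∀ j, (ζ j) ^ k = ∑ i ∈ range k, (ζ j) ^ i)
    (hinj : Function.Injective ζ)
    (F : ℕ → ℂ)
    (h0 : ∀ n < k - 1, F n = 0) (h1 : F (k - 1) = 1)
    (hrec : ∀ n, k ≤ n → F n = ∑ j ∈ range k, F (n - (j + 1))) :
    ∀ n : ℕ, F n = ∑ j : Fin k,
      ((ζ j - 1) / ((k + 1) * ζ j - 2 * k)) * (ζ j) ^ ((n : ℤ) - k + 1) := by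
  classical
  have hζ0 : ∀ j, ζ j ≠ 0 := zeta_ne_zero' k hk ζ hroot
  set G : ℕ → ℂ := fun n => ∑ j : Fin k,
      ((ζ j - 1) / ((k + 1) * ζ j - 2 * k)) * (ζ j) ^ ((n : ℤ) - k + 1) with hG
  -- initial values of G
  have hGinit : ∀ n < k, G n = if n = k - 1 then 1 else 0 := by
    intro n hn
    have : G n = ∑ j : Fin k, ζ j ^ n * Lagrange.nodalWeight Finset.univ ζ j := by
      refine Finset.sum_congr rfl fun j _ => ?_
      rw [coeff_eq' k hk ζ hroot hinj j, mul_right_comm]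
      congr 1
      rw [← zpow_natCast (ζ j) (k - 1), ← zpow_natCast (ζ j) n,
        ← zpow_add₀ (hζ0 j)]
      congr 1
      push_cast [Nat.cast_sub (by omega : 1 ≤ k)]
      ring
    rw [this, vandermonde_residue' k ζ hinj n hn]
  -- recurrence for G
  have hGrec : ∀ n, k ≤ n → G n = ∑ j ∈ range k, G (n - (j + 1)) := by
    intro n hn
    rw [hG]
    simp only
    rw [Finset.sum_comm]
    refine Finset.sum_congr rfl fun j _ => ?_
    rw [← Finset.mul_sum]
    congr 1
    have hcast : ∀ i ∈ range k, ((↑(n - (i + 1)) : ℤ) - k + 1)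
        = ((n : ℤ) - 2 * k + 1) + ((k - 1 - i : ℕ) : ℤ) := by
      intro i hi
      have hi' := Finset.mem_range.mp hi
      have h1 : ((n - (i + 1) : ℕ) : ℤ) = (n : ℤ) - (i + 1) := by
        push_cast [Nat.cast_sub (by omega : i + 1 ≤ n)]; ring
      have h2 : ((k - 1 - i : ℕ) : ℤ) = (k : ℤ) - 1 - i := by
        push_cast [Nat.cast_sub (by omega : i ≤ k - 1), Nat.cast_sub (by omega : 1 ≤ k)]; ring
      rw [h1, h2]; ring
    rw [Finset.sum_congr rfl fun i hi => by
      rw [hcast i hi, zpow_add₀ (hζ0 j), zpow_natCast]]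
    rw [← Finset.mul_sum, Finset.sum_range_reflect (fun i => ζ j ^ i) k, ← hroot j]
    rw [← zpow_natCast (ζ j) k, ← zpow_add₀ (hζ0 j)]
    congr 1
    push_cast
    ring
  -- strong induction
  intro n
  induction n using Nat.strong_induction_on with
  | _ n ih =>
    show F n = G n
    by_cases hnk : n < k
    · rw [hGinit n hnk]
      by_cases h : n = k - 1
      · rw [h, h1, if_pos rfl]
      · rw [h0 n (by omega), if_neg h]
    · push_neg at hnk
      rw [hrec n hnk, hGrec n hnk]
      refine Finset.sum_congr rfl fun j hj => ?_
      exact ih _ (by have := Finset.mem_range.mp hj; omega)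
end

section
/- With A(x) = x^k - x^{k-1} - ... - 1 having distinct roots ζ₀,…,ζ_{k-1}, for each j the product ∏_{s≠j}(ζ_j - ζ_s) equals ((k+1)ζ_j - 2k)·ζ_j^{k-1}/(ζ_j - 1). -/
open Finset Polynomial

theorem stmt_13 (k : ℕ) (hk : 2 ≤ k) (ζ : Fin k → ℂ)
    (hroot : ∀ j, (ζ j) ^ k = ∑ i ∈ range k, (ζ j) ^ i)
    (hinj : Function.Injective ζ) (j : Fin k) :
    ∏ s ∈ Finset.univ.erase j, (ζ j - ζ s)
      = ((k + 1) * ζ j - 2 * k) * (ζ j) ^ (k - 1) / (ζ j - 1) := by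
  classical
  have hk0 : k ≠ 0 := by omega
  set z := ζ j with hzdef
  -- z ≠ 1
  have hz1 : z - 1 ≠ 0 := by
    intro h
    have hz : z = 1 := by linear_combination h
    have h2 := hroot j
    rw [← hzdef, hz] at h2
    simp at h2
    have h3 : (k : ℕ) = 1 := by exact_mod_cast h2.symm
    omega
  -- the polynomial p = X^k - ∑ X^i
  set p : ℂ[X] := X ^ k - ∑ i ∈ range k, X ^ i with hp
  have hpe : ∀ w : ℂ, p.eval w = w ^ k - ∑ i ∈ range k, w ^ i := by
    intro w
    simp [hp, eval_finset_sum]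
  have hpz : ∀ s, p.eval (ζ s) = 0 := by
    intro s
    rw [hpe, sub_eq_zero]
    exact hroot s
  -- p is monic of degree k
  have hdegsum : (∑ i ∈ range k, (X : ℂ[X]) ^ i).natDegree < k := by
    calc (∑ i ∈ range k, (X : ℂ[X]) ^ i).natDegree
        ≤ (range k).fold max 0 fun i => ((X : ℂ[X]) ^ i).natDegree :=
          natDegree_sum_le _ _
      _ < k := by
          apply (Finset.fold_max_lt _).2
          constructor
          · omega
          · intro i hi
            simp only [natDegree_X_pow]
            exact mem_range.mp hi
  have hdegsum' : (∑ i ∈ range k, (X : ℂ[X]) ^ i).degree < (k : ℕ) := by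
    apply lt_of_le_of_lt (degree_le_natDegree)
    exact_mod_cast hdegsum
  have hmonic : p.Monic := by
    rw [hp]
    apply (monic_X_pow k).sub_of_left
    rwa [degree_X_pow]
  have hdeg : p.natDegree = k := by
    rw [hp]
    rw [natDegree_sub_eq_left_of_natDegree_lt]
    · exact natDegree_X_pow k
    · rwa [natDegree_X_pow]
  -- p = ∏ (X - C (ζ s))
  have hdvd : (∏ s : Fin k, (X - C (ζ s))) ∣ p := by
    apply Finset.prod_dvd_of_coprime
    · intro a _ b _ hab
      exact (Polynomial.pairwise_coprime_X_sub_C hinj) hab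
    · intro s _
      exact dvd_iff_isRoot.mpr (hpz s)
  have hqmonic : (∏ s : Fin k, (X - C (ζ s))).Monic :=
    monic_prod_of_monic _ _ fun s _ => monic_X_sub_C (ζ s)
  have hqdeg : (∏ s : Fin k, (X - C (ζ s))).natDegree = k := by
    rw [natDegree_prod _ _ fun s _ => X_sub_C_ne_zero (ζ s)]
    simp
  have hpq : p = ∏ s : Fin k, (X - C (ζ s)) :=
    Polynomial.eq_of_monic_of_dvd_of_natDegree_le hqmonic hmonic hdvd
      (by rw [hdeg, hqdeg])
  -- the product is p'(z)
  have hprod : ∏ s ∈ Finset.univ.erase j, (z - ζ s) = (derivative p).eval z := by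
    have hmem : z ∈ Multiset.map ζ Finset.univ.val := by
      rw [Multiset.mem_map]; exact ⟨j, Finset.mem_univ j, rfl⟩
    have h1 : p = (Multiset.map (fun a => X - C a) (Multiset.map ζ Finset.univ.val)).prod := by
      rw [hpq, Finset.prod, Multiset.map_map]
      rfl
    rw [h1, eval_multiset_prod_X_sub_C_derivative hmem]
    have h2 : (Multiset.map ζ Finset.univ.val).erase z
        = Multiset.map ζ (Finset.univ.erase j).val := by
      rw [Finset.erase_val, ← Multiset.map_erase_of_mem _ _ (Finset.mem_univ j)]
    rw [h2, Finset.prod, Multiset.map_map]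
    rfl
  -- the key polynomial identity: (X - 1) * p = X^(k+1) - 2 X^k + 1
  have hB : (X - 1) * p = X ^ (k + 1) - 2 * X ^ k + 1 := by
    rw [hp]
    have hg := geom_sum_mul (X : ℂ[X]) k
    linear_combination (-1 : ℂ[X]) * hg
  -- differentiate and evaluate at z
  have hD := congrArg (fun q : ℂ[X] => (derivative q).eval z) hB
  simp only [derivative_mul, derivative_sub, derivative_add, derivative_one,
    derivative_X, derivative_X_pow, derivative_ofNat, eval_add, eval_sub, eval_mul,
    eval_natCast, eval_pow, eval_X, eval_one, eval_ofNat, eval_zero, eval_C, sub_zero,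
    one_mul, mul_zero, zero_mul, add_zero, zero_add] at hD
  rw [hpz j] at hD
  simp only [zero_mul, zero_add] at hD
  have hzk : z ^ k = z * z ^ (k - 1) := by
    conv_lhs => rw [show k = (k - 1) + 1 by omega]
    ring
  rw [eq_div_iff hz1]
  rw [← hprod] at hD
  push_cast at hD ⊢
  linear_combination hD + ((k : ℂ) + 1) * hzk
end

section
/- Let W_i(n), i = 0,…,k-1, be the solutions of f(n) = ∑_{j=1}^k β_j f(n-j) with initial conditions W_i(n) = δ_{in} for 0 ≤ n ≤ k-1. Then for 0 ≤ i ≤ k-2 and all n ≥ k, W_i(n) = ∑_{s=0}^{i} β_{k+s-i} · W_{k-1}(n-s-1). -/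
open Finset

theorem stmt_14 (k : ℕ) (hk : 2 ≤ k) (β : ℕ → ℂ)
    (W : Fin k → ℕ → ℂ)
    (hinit : ∀ (i : Fin k) (n : ℕ), n < k → W i n = if (i : ℕ) = n then 1 else 0)
    (hrec : ∀ (i : Fin k) (n : ℕ), k ≤ n → W i n = ∑ j ∈ range k, β (j + 1) * W i (n - (j + 1)))
    (i : Fin k) (hi : (i : ℕ) ≤ k - 2) (n : ℕ) (hn : k ≤ n) :
    W i n = ∑ s ∈ range ((i : ℕ) + 1),
      β (k + s - (i : ℕ)) * W ⟨k - 1, by omega⟩ (n - s - 1) := by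
  have hik : (i : ℕ) < k := i.isLt
  have K1 : Fin k := ⟨k - 1, by omega⟩
  have key : ∀ n, (i : ℕ) + 1 ≤ n → W i n = ∑ s ∈ range ((i : ℕ) + 1),
      β (k + s - (i : ℕ)) * W ⟨k - 1, by omega⟩ (n - s - 1) := by
    intro n
    induction n using Nat.strong_induction_on with
    | _ n IH =>
      intro hn1
      rcases lt_or_ge n k with hnk | hnk
      · -- base region: n < k, both sides vanish
        rw [hinit i n hnk, if_neg (by omega)]
        refine (Finset.sum_eq_zero ?_).symm
        intro s hs
        simp only [mem_range] at hs
        rw [hinit ⟨k - 1, by omega⟩ (n - s - 1) (by omega)]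
        rw [if_neg (by simp only []; omega)]
        exact mul_zero _
      · rw [hrec i n hnk]
        have claimA : ∀ j ∈ range k,
            β (j + 1) * W i (n - (j + 1)) =
            (∑ s ∈ range ((i : ℕ) + 1),
              β (j + 1) * (β (k + s - (i : ℕ)) * W ⟨k - 1, by omega⟩ (n - j - s - 2)))
            + (if j + 1 = n - (i : ℕ) then β (j + 1) else 0) := by
          intro j hj
          simp only [mem_range] at hj
          by_cases hcase : j + (i : ℕ) + 2 ≤ n
          · rw [IH (n - (j + 1)) (by omega) (by omega), Finset.mul_sum,
              if_neg (by omega), add_zero]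
            refine Finset.sum_congr rfl ?_
            intro s hs
            have he : n - (j + 1) - s - 1 = n - j - s - 2 := by omega
            rw [he]
          · push_neg at hcase
            rw [hinit i (n - (j + 1)) (by omega)]
            have hz : ∀ s ∈ range ((i : ℕ) + 1),
                β (j + 1) * (β (k + s - (i : ℕ)) * W ⟨k - 1, by omega⟩ (n - j - s - 2)) = 0 := by
              intro s hs
              simp only [mem_range] at hs
              rw [hinit ⟨k - 1, by omega⟩ (n - j - s - 2) (by omega),
                if_neg (by simp only []; omega)]
              ring
            rw [Finset.sum_eq_zero hz, zero_add]
            by_cases hd : (i : ℕ) = n - (j + 1)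
            · rw [if_pos hd, if_pos (by omega), mul_one]
            · rw [if_neg hd, if_neg (by omega), mul_zero]
        have claimB : ∀ s ∈ range ((i : ℕ) + 1),
            β (k + s - (i : ℕ)) * W ⟨k - 1, by omega⟩ (n - s - 1) =
            (∑ j ∈ range k,
              β (k + s - (i : ℕ)) * (β (j + 1) * W ⟨k - 1, by omega⟩ (n - s - j - 2)))
            + (if s = n - k then β (k + s - (i : ℕ)) else 0) := by
          intro s hs
          simp only [mem_range] at hs
          by_cases hcase : s + k + 1 ≤ n
          · rw [hrec ⟨k - 1, by omega⟩ (n - s - 1) (by omega), Finset.mul_sum,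
              if_neg (by omega), add_zero]
            refine Finset.sum_congr rfl ?_
            intro j hj
            have he : n - s - 1 - (j + 1) = n - s - j - 2 := by omega
            rw [he]
          · push_neg at hcase
            rw [hinit ⟨k - 1, by omega⟩ (n - s - 1) (by omega)]
            have hz : ∀ j ∈ range k,
                β (k + s - (i : ℕ)) * (β (j + 1) * W ⟨k - 1, by omega⟩ (n - s - j - 2)) = 0 := by
              intro j hj
              simp only [mem_range] at hj
              rw [hinit ⟨k - 1, by omega⟩ (n - s - j - 2) (by omega),
                if_neg (by simp only []; omega)]
              ring
            rw [Finset.sum_eq_zero hz, zero_add]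
            by_cases hd : (k - 1 : ℕ) = n - s - 1
            · rw [if_pos (by simp only []; omega), if_pos (by omega), mul_one]
            · rw [if_neg (by simp only []; omega), if_neg (by omega), mul_zero]
        rw [Finset.sum_congr rfl claimA, Finset.sum_congr rfl claimB,
          Finset.sum_add_distrib, Finset.sum_add_distrib]
        congr 1
        · rw [Finset.sum_comm]
          refine Finset.sum_congr rfl ?_
          intro s hs
          refine Finset.sum_congr rfl ?_
          intro j hj
          have he : n - j - s - 2 = n - s - j - 2 := by omega
          rw [he]; ring
        · have hA : ∑ j ∈ range k, (if j + 1 = n - (i : ℕ) then β (j + 1) else 0)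
              = if n - (i : ℕ) - 1 ∈ range k then β (n - (i : ℕ) - 1 + 1) else 0 := by
            rw [← Finset.sum_ite_eq' (range k) (n - (i : ℕ) - 1) (fun j => β (j + 1))]
            refine Finset.sum_congr rfl ?_
            intro j hj
            simp only [mem_range] at hj
            by_cases hd : j + 1 = n - (i : ℕ)
            · rw [if_pos hd, if_pos (by omega)]
            · rw [if_neg hd, if_neg (by omega)]
          have hB : ∑ s ∈ range ((i : ℕ) + 1), (if s = n - k then β (k + s - (i : ℕ)) else 0)
              = if n - k ∈ range ((i : ℕ) + 1) then β (k + (n - k) - (i : ℕ)) else 0 := by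
            rw [Finset.sum_ite_eq' (range ((i : ℕ) + 1)) (n - k)
              (fun s => β (k + s - (i : ℕ)))]
          rw [hA, hB]
          simp only [mem_range]
          by_cases hcond : n ≤ k + (i : ℕ)
          · rw [if_pos (by omega), if_pos (by omega)]
            congr 1
            omega
          · rw [if_neg (by omega), if_neg (by omega)]
  exact key n (by omega)
end

section
/- With ζ₀,…,ζ_{k-1} the distinct roots of x^k - x^{k-1} - ... - 1, the basis sequences of the k-generalized Fibonacci recurrence satisfy, for 1 ≤ m ≤ k and n ≥ 0: B_{k,k-m}(n) = ∑_{j=0}^{k-1} ((ζ_j^m - 2ζ_j^{m-1} + 1)/((k+1)ζ_j - 2k)) · ζ_j^{n-k+1}. -/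
open Finset Polynomial

private lemma seq_unique (k : ℕ) (f g : ℕ → ℂ)
    (hinit : ∀ n < k, f n = g n)
    (hf : ∀ r, f (r + k) = ∑ j ∈ range k, f (r + j))
    (hg : ∀ r, g (r + k) = ∑ j ∈ range k, g (r + j)) : ∀ n, f n = g n := by
  intro n
  induction n using Nat.strong_induction_on with
  | _ n ih =>
    rcases lt_or_ge n k with h | h
    · exact hinit n h
    · obtain ⟨r, rfl⟩ : ∃ r, n = r + k := ⟨n - k, by omega⟩
      rw [hf, hg]
      exact Finset.sum_congr rfl fun j hj => ih (r + j) (by have := mem_range.mp hj; omega)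

private lemma window_shift (f : ℕ → ℂ) (a n : ℕ) :
    ∑ i ∈ range n, f (a + 1 + i) = ∑ i ∈ range n, f (a + i) + f (a + n) - f a := by
  induction n with
  | zero => simp
  | succ n ih =>
    rw [sum_range_succ, sum_range_succ, ih, show a + 1 + n = a + (n+1) by omega]
    ring

theorem stmt_16 (k : ℕ) (hk : 2 ≤ k) (ζ : Fin k → ℂ)
    (hroot : ∀ j, (ζ j) ^ k = ∑ i ∈ range k, (ζ j) ^ i)
    (hinj : Function.Injective ζ)
    (B : Fin k → ℕ → ℂ)
    (hinit : ∀ (i : Fin k) (n : ℕ), n < k → B i n = if (i : ℕ) = n then 1 else 0)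
    (hrec : ∀ (i : Fin k) (n : ℕ), k ≤ n → B i n = ∑ j ∈ range k, B i (n - (j + 1)))
    (m : ℕ) (hm1 : 1 ≤ m) (hmk : m ≤ k) (n : ℕ) :
    B ⟨k - m, by omega⟩ n = ∑ j : Fin k,
      (((ζ j) ^ m - 2 * (ζ j) ^ (m - 1) + 1) / ((k + 1) * ζ j - 2 * k))
        * (ζ j) ^ ((n : ℤ) - k + 1) := by
  classical
  have hinjOn : Set.InjOn ζ (univ : Finset (Fin k)) := hinj.injOn
  have hζ1 : ∀ j, ζ j ≠ 1 := by
    intro j h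
    have h2 := hroot j
    rw [h] at h2
    simp at h2
    have : (k : ℕ) = 1 := by exact_mod_cast h2.symm
    omega
  have hkey : ∀ j, ζ j ^ (k+1) - 2 * ζ j ^ k + 1 = 0 := by
    intro j
    have hg := geom_sum_mul (ζ j) k
    linear_combination (ζ j - 1) * hroot j + hg
  set D : Fin k → ℂ := fun j => ∏ i ∈ univ.erase j, (ζ j - ζ i) with hDdef
  have hD0 : ∀ j, D j ≠ 0 := fun j => prod_ne_zero_iff.mpr fun i hi =>
    sub_ne_zero.mpr fun h => (mem_erase.mp hi).1 ((hinj h).symm)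
  -- polynomial identity
  set P : ℂ[X] := Lagrange.nodal univ ζ with hPdef
  have hPdeg : P.degree = (k : WithBot ℕ) := by
    rw [hPdef, Lagrange.degree_nodal, card_univ, Fintype.card_fin]
  have hdlt : (C 2 * X ^ k - C 1 : ℂ[X]).degree < (X ^ (k+1) : ℂ[X]).degree := by
    rw [degree_X_pow]
    apply lt_of_le_of_lt (degree_sub_le _ _)
    rw [max_lt_iff]
    constructor
    · exact lt_of_le_of_lt (le_of_eq (degree_C_mul_X_pow k two_ne_zero))
        (by exact_mod_cast Nat.lt_succ_self k)
    · apply lt_of_le_of_lt (degree_C_le)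
      exact_mod_cast Nat.succ_pos k
  have hp_eq : (X - C 1) * P = X ^ (k+1) - (C 2 * X ^ k - C 1) := by
    have hq_deg : (X ^ (k+1) - (C 2 * X ^ k - C 1) : ℂ[X]).degree = ((k+1 : ℕ) : WithBot ℕ) := by
      rw [degree_sub_eq_left_of_degree_lt hdlt, degree_X_pow]
    have hq_lc : (X ^ (k+1) - (C 2 * X ^ k - C 1) : ℂ[X]).leadingCoeff = 1 := by
      rw [leadingCoeff_sub_of_degree_lt hdlt, leadingCoeff_X_pow]
    have hmono_p : ((X - C 1) * P).Monic := (monic_X_sub_C 1).mul Lagrange.nodal_monic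
    have hp_deg : ((X - C 1) * P).degree = ((k+1 : ℕ) : WithBot ℕ) := by
      rw [degree_mul, degree_X_sub_C, hPdeg]
      rw [show ((k+1 : ℕ) : WithBot ℕ) = ((1:ℕ) : WithBot ℕ) + ((k:ℕ) : WithBot ℕ) by
        rw [← Nat.cast_add]; congr 1; omega]
      rfl
    rw [← sub_eq_zero]
    by_cases h0 : ((X - C 1) * P - (X ^ (k+1) - (C 2 * X ^ k - C 1)) : ℂ[X]) = 0
    · exact h0
    apply eq_zero_of_natDegree_lt_card_of_eval_eq_zero' _ (insert (1:ℂ) (univ.image ζ))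
    · intro x hx
      rcases mem_insert.mp hx with rfl | hx
      · simp [P, Lagrange.eval_nodal]
        norm_num
      · obtain ⟨j, -, rfl⟩ := mem_image.mp hx
        have h1 := hkey j
        simp only [hPdef, eval_sub, eval_mul, eval_pow, eval_X, eval_C,
          Lagrange.eval_nodal_at_node (mem_univ j), mul_zero]
        linear_combination -h1
    · have hcard : #(insert (1:ℂ) (univ.image ζ)) = k + 1 := by
        rw [card_insert_of_notMem, card_image_of_injective _ hinj, card_univ, Fintype.card_fin]
        simp only [mem_image]
        rintro ⟨j, -, hj⟩
        exact hζ1 j hj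
      rw [hcard]
      have hlt := degree_sub_lt (hp_deg.trans hq_deg.symm) hmono_p.ne_zero
        (hmono_p.leadingCoeff.trans hq_lc.symm)
      rw [hp_deg] at hlt
      exact (natDegree_lt_iff_degree_lt h0).mpr hlt
  have hDstar : ∀ j, (ζ j - 1) * D j = ((k:ℂ)+1) * ζ j ^ k - 2 * ((k:ℂ) * ζ j ^ (k-1)) := by
    intro j
    have he := congrArg (eval (ζ j)) (congrArg derivative hp_eq)
    simp only [hPdef, derivative_mul, derivative_sub, derivative_X, derivative_C, derivative_X_pow,
      derivative_one, sub_zero, one_mul, eval_add, eval_sub, eval_mul, eval_pow, eval_X, eval_C,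
      eval_natCast, Lagrange.eval_nodal_at_node (mem_univ j), mul_zero, zero_mul, zero_add,
      Lagrange.eval_nodal_derivative_eval_node_eq (mem_univ j), Lagrange.eval_nodal] at he
    push_cast at he
    exact he
  have hDstar' : ∀ j, (ζ j - 1) * D j = ζ j ^ (k-1) * (((k:ℂ) + 1) * ζ j - 2 * (k:ℂ)) := by
    intro j
    have h := hDstar j
    have hp : ζ j ^ k = ζ j ^ (k-1) * ζ j := by
      rw [← pow_succ]
      congr 1
      omega
    linear_combination h + ((k:ℂ)+1) * hp
  have hζ0 : ∀ j, ζ j ≠ 0 := by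
    intro j h
    have h2 := hDstar' j
    rw [h, zero_pow (by omega : k - 1 ≠ 0), zero_mul] at h2
    have : D j = 0 := by
      have h3 : ((0:ℂ) - 1) ≠ 0 := by norm_num
      field_simp at h2
      exact (mul_eq_zero.mp h2).resolve_left h3
    exact hD0 j this
  have hA0 : ∀ j, ((k:ℂ) + 1) * ζ j - 2 * (k:ℂ) ≠ 0 := by
    intro j h
    have h2 := hDstar' j
    rw [h, mul_zero] at h2
    exact mul_ne_zero (sub_ne_zero.mpr (hζ1 j)) (hD0 j) h2
  -- Lagrange interpolation: initial values of F
  set F : ℕ → ℂ := fun r => ∑ j, ζ j ^ r * (D j)⁻¹ with hFdef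
  have hFinit : ∀ r < k, F r = if r = k - 1 then 1 else 0 := by
    intro r hr
    have hX : (X ^ r : ℂ[X]) = Lagrange.interpolate univ ζ (fun j => ζ j ^ r) := by
      apply Lagrange.eq_interpolate_of_eval_eq _ hinjOn
      · rw [degree_X_pow, card_univ, Fintype.card_fin]
        exact_mod_cast hr
      · intro i _
        simp
    have hco := congrArg (fun p => coeff p (k-1)) hX
    simp only [coeff_X_pow, Lagrange.interpolate_apply, finset_sum_coeff, coeff_C_mul] at hco
    have hbasis : ∀ j : Fin k, (Lagrange.basis univ ζ j).coeff (k-1) = (D j)⁻¹ := by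
      intro j
      rw [Lagrange.basis_eq_prod_sub_inv_mul_nodal_div (mem_univ j),
        ← Lagrange.nodal_erase_eq_nodal_div (mem_univ j), coeff_C_mul]
      have hnd : (Lagrange.nodal (univ.erase j) ζ).natDegree = k - 1 := by
        rw [Lagrange.natDegree_nodal, card_erase_of_mem (mem_univ j), card_univ, Fintype.card_fin]
      rw [← hnd, (Lagrange.nodal_monic).coeff_natDegree, mul_one, Lagrange.nodalWeight,
        ← prod_inv_distrib]
    simp only [hbasis] at hco
    rw [hFdef]
    simp only
    rw [← hco]
    by_cases h : r = k - 1
    · rw [if_pos h.symm, if_pos h]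
    · rw [if_neg (fun hh => h hh.symm), if_neg h]
  have hFrec : ∀ r, F (r + k) = ∑ i ∈ range k, F (r + i) := by
    intro r
    have hz : ∀ j : Fin k, ζ j ^ (r + k) = ∑ i ∈ range k, ζ j ^ (r + i) := by
      intro j
      rw [pow_add, hroot j, Finset.mul_sum]
      exact Finset.sum_congr rfl fun i _ => (pow_add _ _ _).symm
    rw [hFdef]
    simp only
    calc (∑ j, ζ j ^ (r + k) * (D j)⁻¹)
        = ∑ j, ∑ i ∈ range k, ζ j ^ (r + i) * (D j)⁻¹ := by
          refine Finset.sum_congr rfl fun j _ => ?_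
          rw [hz j, Finset.sum_mul]
      _ = ∑ i ∈ range k, ∑ j, ζ j ^ (r + i) * (D j)⁻¹ := Finset.sum_comm
  have hdouble : ∀ t, 1 ≤ t → t ≤ k - 1 → F (k + t) = 2 * F (k - 1 + t) := by
    intro t h1 h2
    obtain ⟨t', rfl⟩ : ∃ t', t = t' + 1 := ⟨t - 1, by omega⟩
    have e1 : F (k + (t' + 1)) = ∑ i ∈ range k, F (t' + 1 + i) := by
      rw [show k + (t' + 1) = (t' + 1) + k by omega]
      exact hFrec (t' + 1)
    have e2 : F (k - 1 + (t' + 1)) = ∑ i ∈ range k, F (t' + i) := by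
      rw [show k - 1 + (t' + 1) = t' + k by omega]
      exact hFrec t'
    have hw := window_shift F t' k
    have hz : F t' = 0 := by
      rw [hFinit t' (by omega), if_neg (by omega)]
    rw [e1, e2, hw, hz, sub_zero, show t' + k = k - 1 + (t' + 1) by omega, ← e2,
      show k - 1 + (t' + 1) = t' + k by omega]
    ring
  -- the candidate sequence G
  set G : ℕ → ℂ := fun n => F (n + (m - 1)) - ∑ i ∈ range (m - 1), F (n + i) with hGdef
  have hGrec : ∀ r, G (r + k) = ∑ j ∈ range k, G (r + j) := by
    intro r
    have h1 : F (r + k + (m - 1)) = ∑ j ∈ range k, F (r + j + (m - 1)) := by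
      rw [show r + k + (m - 1) = (r + (m - 1)) + k by omega, hFrec]
      exact Finset.sum_congr rfl fun j _ => by rw [show r + (m-1) + j = r + j + (m-1) by omega]
    have h2 : ∀ i, F (r + k + i) = ∑ j ∈ range k, F (r + j + i) := by
      intro i
      rw [show r + k + i = (r + i) + k by omega, hFrec]
      exact Finset.sum_congr rfl fun j _ => by rw [show r + i + j = r + j + i by omega]
    rw [hGdef]
    simp only
    rw [h1, Finset.sum_sub_distrib]
    congr 1
    exact (Finset.sum_congr rfl fun i _ => h2 i).trans Finset.sum_comm
  have hGinit : ∀ n, n < k → G n = if k - m = n then 1 else 0 := by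
    intro n hn
    rw [hGdef]
    simp only
    by_cases hcase : n + m ≤ k
    · have hsum0 : ∑ i ∈ range (m - 1), F (n + i) = 0 := by
        refine Finset.sum_eq_zero fun i hi => ?_
        have hi' := mem_range.mp hi
        rw [hFinit _ (by omega), if_neg (by omega)]
      rw [hsum0, sub_zero, hFinit _ (by omega)]
      by_cases h : k - m = n
      · rw [if_pos (by omega), if_pos h]
      · rw [if_neg (by omega), if_neg h]
    · have hm2 : 2 ≤ m := by omega
      rw [if_neg (by omega)]
      have main : ∀ t, 1 ≤ t → t ≤ m - 1 →
          ∑ i ∈ range (m - 1), F (k - m + t + i) = F (k - 1 + t) := by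
        intro t
        induction t with
        | zero => omega
        | succ t ih =>
          intro _ hle
          by_cases ht0 : t = 0
          · subst ht0
            have hone : ∀ i ∈ range (m - 1), F (k - m + 1 + i) =
                if i = m - 2 then 1 else 0 := by
              intro i hi
              have hi' := mem_range.mp hi
              rw [hFinit _ (by omega)]
              by_cases h : i = m - 2
              · rw [if_pos (by omega), if_pos h]
              · rw [if_neg (by omega), if_neg h]
            rw [Finset.sum_congr rfl hone, Finset.sum_ite_eq' (range (m-1)) (m-2)
              (fun _ => (1:ℂ)), if_pos (mem_range.mpr (by omega))]
            have hFk : F (k - 1 + 1) = 1 := by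
              rw [show k - 1 + 1 = 0 + k by omega, hFrec]
              have hone2 : ∀ i ∈ range k, F (0 + i) = if i = k - 1 then 1 else 0 := by
                intro i hi
                have hi' := mem_range.mp hi
                rw [show 0 + i = i by omega, hFinit _ hi']
              rw [Finset.sum_congr rfl hone2, Finset.sum_ite_eq' (range k) (k-1)
                (fun _ => (1:ℂ)), if_pos (mem_range.mpr (by omega))]
            rw [hFk]
          · have ih' := ih (by omega) (by omega)
            have hw := window_shift F (k - m + t) (m - 1)
            rw [show k - m + (t + 1) = k - m + t + 1 by omega, hw, ih']
            have hz : F (k - m + t) = 0 := by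
              rw [hFinit _ (by omega), if_neg (by omega)]
            rw [hz, sub_zero, show k - m + t + (m - 1) = k - 1 + t by omega]
            have hdd := hdouble t (by omega) (by omega)
            rw [show k - 1 + (t + 1) = k + t by omega, hdd]
            ring
      have := main (n + m - k) (by omega) (by omega)
      rw [show k - m + (n + m - k) = n by omega] at this
      rw [show n + (m - 1) = k - 1 + (n + m - k) by omega, ← this, sub_self]
  -- B equals G
  have hBrec : ∀ r, B ⟨k - m, by omega⟩ (r + k) = ∑ j ∈ range k, B ⟨k - m, by omega⟩ (r + j) := by
    intro r
    rw [hrec _ (r + k) (by omega)]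
    have hcg : ∀ j ∈ range k, B ⟨k - m, by omega⟩ (r + k - (j + 1)) =
        B ⟨k - m, by omega⟩ (r + (k - 1 - j)) := by
      intro j hj
      have hj' := mem_range.mp hj
      congr 1
      omega
    rw [Finset.sum_congr rfl hcg]
    exact Finset.sum_range_reflect (fun j => B ⟨k - m, by omega⟩ (r + j)) k
  have hBG : ∀ n, B ⟨k - m, by omega⟩ n = G n := by
    refine seq_unique k _ _ (fun n hn => ?_) hBrec hGrec
    rw [hinit _ n hn, hGinit n hn]
  rw [hBG n, hGdef]
  simp only
  -- expand G n as a single sum over j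
  have hexp : F (n + (m - 1)) - ∑ i ∈ range (m - 1), F (n + i) =
      ∑ j, (ζ j ^ (m - 1) - ∑ i ∈ range (m - 1), ζ j ^ i) * ζ j ^ n * (D j)⁻¹ := by
    rw [hFdef]
    simp only
    rw [Finset.sum_comm (s := range (m-1)), ← Finset.sum_sub_distrib]
    refine Finset.sum_congr rfl fun j _ => ?_
    rw [sub_mul, sub_mul, Finset.sum_mul]
    congr 1
    · rw [pow_add]
      ring
    · rw [Finset.sum_mul]
      exact Finset.sum_congr rfl fun i _ => by rw [pow_add]; ring
  rw [hexp]
  refine Finset.sum_congr rfl fun j _ => ?_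
  -- per-root identity
  have hzp : (ζ j : ℂ) ^ ((n:ℤ) - k + 1) = ζ j ^ n * (ζ j ^ (k-1))⁻¹ := by
    rw [show (n:ℤ) - k + 1 = (n:ℤ) - ((k - 1 : ℕ) : ℤ) by push_cast [Nat.cast_sub (by omega : 1 ≤ k)]; ring,
      zpow_sub₀ (hζ0 j), zpow_natCast, zpow_natCast, div_eq_mul_inv]
  rw [hzp]
  have hQ : (ζ j - 1) * (ζ j ^ (m-1) - ∑ i ∈ range (m-1), ζ j ^ i) =
      ζ j ^ m - 2 * ζ j ^ (m-1) + 1 := by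
    have hg := geom_sum_mul (ζ j) (m-1)
    have hp : ζ j ^ m = ζ j ^ (m-1) * ζ j := by
      rw [← pow_succ]
      congr 1
      omega
    linear_combination -hg - hp
  have hD' := hDstar' j
  have hA := hA0 j
  have hD := hD0 j
  have hz := hζ0 j
  have h1 := sub_ne_zero.mpr (hζ1 j)
  have hzk : ζ j ^ (k-1) ≠ 0 := pow_ne_zero _ hz
  have hDe : D j = ζ j ^ (k-1) * (((k:ℂ) + 1) * ζ j - 2 * (k:ℂ)) / (ζ j - 1) := by
    rw [← hD', mul_div_cancel_left₀ _ h1]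
  rw [hDe, ← hQ, inv_div]
  simp only [div_eq_mul_inv, mul_inv]
  ring
end

section
/- Let f satisfy f(n) = ∑_{j=1}^k β_j f(n-j) for n ≥ k with f(0)=...=f(k-2)=0, f(k-1)=1. Then for all n ≥ 0, f(n+k-1) = ∑_{i₁ + 2i₂ + ... + k·i_k = n} multinomial(i₁+...+i_k; i₁,…,i_k) · β₁^{i₁}···β_k^{i_k}. -/
open Finset Polynomial

private noncomputable def pp {k : ℕ} {R : Type*} [CommRing R] (β : Fin k → R) : Polynomial R :=
  ∑ j : Fin k, C (β j) * X ^ ((j : ℕ) + 1)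

private noncomputable def SS {k : ℕ} {R : Type*} [CommRing R] (β : Fin k → R) (N : ℕ) :
    Polynomial R :=
  ∑ m ∈ range (N + 1), (pp β) ^ m

private lemma pp_eq {k : ℕ} {R : Type*} [CommRing R] (β : Fin k → R) :
    pp β = X * ∑ j : Fin k, C (β j) * X ^ (j : ℕ) := by
  rw [pp, Finset.mul_sum]
  exact Finset.sum_congr rfl fun j _ => by ring

private lemma coeff_pp_pow_zero {k : ℕ} {R : Type*} [CommRing R] (β : Fin k → R) {m n : ℕ}
    (h : n < m) : ((pp β) ^ m).coeff n = 0 := by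
  rw [pp_eq, mul_pow, mul_comm, Polynomial.coeff_mul_X_pow', if_neg (by omega)]

private lemma coeff_SS_stable {k : ℕ} {R : Type*} [CommRing R] (β : Fin k → R) {n N : ℕ}
    (h : n ≤ N) : (SS β N).coeff n = (SS β n).coeff n := by
  induction N, h using Nat.le_induction with
  | base => rfl
  | succ N hN ih =>
    rw [SS, Finset.sum_range_succ, ← SS, Polynomial.coeff_add,
      coeff_pp_pow_zero β (by omega), add_zero, ih]

private lemma coeff_SS_self {k : ℕ} {R : Type*} [CommRing R] (β : Fin k → R) (n : ℕ) :
    (SS β n).coeff n = ∑ i ∈ (Fintype.piFinset fun _ : Fin k => range (n + 1)).filter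
        (fun i => ∑ j : Fin k, ((j : ℕ) + 1) * i j = n),
      (Nat.multinomial Finset.univ i : R) * ∏ j : Fin k, β j ^ i j := by
  classical
  rw [SS, Polynomial.finset_sum_coeff]
  have hpm : ∀ m, ((pp β) ^ m).coeff n =
      ∑ i ∈ ((Fintype.piFinset fun _ : Fin k => range (n + 1)).filter
        (fun i => ∑ j : Fin k, ((j : ℕ) + 1) * i j = n)).filter (fun i => ∑ j, i j = m),
      (Nat.multinomial Finset.univ i : R) * ∏ j : Fin k, β j ^ i j := by
    intro m
    have hsets : ((Fintype.piFinset fun _ : Fin k => range (n + 1)).filter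
        (fun i => ∑ j : Fin k, ((j : ℕ) + 1) * i j = n)).filter (fun i => ∑ j, i j = m)
        = (piAntidiag (univ : Finset (Fin k)) m).filter
          (fun i => ∑ j : Fin k, ((j : ℕ) + 1) * i j = n) := by
      ext i
      simp only [mem_filter, Fintype.mem_piFinset, mem_range, mem_piAntidiag, mem_univ,
        implies_true, and_true, ne_eq]
      constructor
      · rintro ⟨⟨-, h2⟩, h3⟩
        exact ⟨h3, h2⟩
      · rintro ⟨hm, hn⟩
        refine ⟨⟨fun j => ?_, hn⟩, hm⟩
        have hle : ((j : ℕ) + 1) * i j ≤ ∑ j : Fin k, ((j : ℕ) + 1) * i j :=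
          Finset.single_le_sum (f := fun j : Fin k => ((j : ℕ) + 1) * i j)
            (fun _ _ => Nat.zero_le _) (mem_univ j)
        have h2 : i j ≤ ((j : ℕ) + 1) * i j := Nat.le_mul_of_pos_left _ (Nat.succ_pos _)
        omega
    rw [hsets, pp, Finset.sum_pow_eq_sum_piAntidiag, Polynomial.finset_sum_coeff, sum_filter]
    refine sum_congr rfl fun i hi => ?_
    have h1 : ∀ j : Fin k, (C (β j) * X ^ ((j : ℕ) + 1)) ^ i j
        = C (β j ^ i j) * X ^ (((j : ℕ) + 1) * i j) := by
      intro j; rw [mul_pow, ← C_pow, ← pow_mul]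
    simp_rw [h1]
    rw [Finset.prod_mul_distrib, ← map_prod, Finset.prod_pow_eq_pow_sum, ← mul_assoc,
      ← Polynomial.C_eq_natCast, ← C_mul, Polynomial.coeff_C_mul, Polynomial.coeff_X_pow,
      mul_ite, mul_one, mul_zero]
    by_cases he : ∑ j : Fin k, ((j : ℕ) + 1) * i j = n
    · rw [if_pos he, if_pos he.symm]
    · rw [if_neg he, if_neg (Ne.symm he)]
  simp_rw [hpm]
  exact Finset.sum_fiberwise_of_maps_to (fun i hi => by
    simp only [mem_filter, Fintype.mem_piFinset, mem_range] at hi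
    rw [mem_range]
    have hle : ∑ j : Fin k, i j ≤ ∑ j : Fin k, ((j : ℕ) + 1) * i j :=
      Finset.sum_le_sum fun j _ => Nat.le_mul_of_pos_left _ (Nat.succ_pos _)
    omega) _

private lemma coeff_SS_succ {k : ℕ} {R : Type*} [CommRing R] (β : Fin k → R) (n : ℕ) :
    (SS β (n + 1)).coeff (n + 1) =
      ∑ j : Fin k, β j * (if (j : ℕ) ≤ n then (SS β n).coeff (n - (j : ℕ)) else 0) := by
  have h1 : SS β (n + 1) = 1 + pp β * SS β n := by
    rw [SS, Finset.sum_range_succ', pow_zero, SS, Finset.mul_sum]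
    simp_rw [← pow_succ']
    ring
  rw [h1, Polynomial.coeff_add, Polynomial.coeff_one, if_neg (Nat.succ_ne_zero n), zero_add,
    pp, Finset.sum_mul, Polynomial.finset_sum_coeff]
  refine sum_congr rfl fun j _ => ?_
  rw [mul_assoc, Polynomial.coeff_C_mul, mul_comm (X ^ ((j : ℕ) + 1)),
    Polynomial.coeff_mul_X_pow']
  congr 1
  by_cases hj : (j : ℕ) ≤ n
  · rw [if_pos (by omega), if_pos hj]
    congr 1
    omega
  · rw [if_neg (by omega), if_neg hj]

theorem stmt_18 (k : ℕ) (hk : 2 ≤ k) (R : Type*) [CommRing R] (β : Fin k → R)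
    (f : ℕ → R)
    (h0 : ∀ n < k - 1, f n = 0) (h1 : f (k - 1) = 1)
    (hrec : ∀ n, k ≤ n → f n = ∑ j : Fin k, β j * f (n - ((j : ℕ) + 1)))
    (n : ℕ) :
    f (n + k - 1) = ∑ i ∈ (Fintype.piFinset fun _ : Fin k => range (n + 1)).filter
        (fun i => ∑ j : Fin k, ((j : ℕ) + 1) * i j = n),
      (Nat.multinomial Finset.univ i : R) * ∏ j : Fin k, β j ^ i j := by
  rw [← coeff_SS_self β n]
  induction n using Nat.strong_induction_on with
  | _ n ih =>
    match n with
    | 0 =>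
      have h00 : 0 + k - 1 = k - 1 := by omega
      rw [h00, h1, SS]
      simp
    | Nat.succ m =>
      have hmk : m + 1 + k - 1 = m + k := by omega
      rw [hmk, hrec _ (by omega), coeff_SS_succ]
      refine sum_congr rfl fun j _ => ?_
      congr 1
      have hjk : (j : ℕ) < k := j.isLt
      by_cases hj : (j : ℕ) ≤ m
      · rw [if_pos hj]
        have h2 : m + k - ((j : ℕ) + 1) = (m - (j : ℕ)) + k - 1 := by omega
        rw [h2, coeff_SS_stable β (Nat.sub_le m (j : ℕ))]
        exact ih (m - (j : ℕ)) (by omega)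
      · rw [if_neg hj, h0]
        omega
end
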